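/- arXiv:2209.00530 — 8 statements merged into one kernel-verified Lean document; each statement's English description precedes it below -/
import Mathlib

section
/- Let E, ℓ : (Fin m → ℂ) × (Fin n → ℂ) → ℂ be complex-differentiable (holomorphic) on an open set, let W ⊆ (Fin m → ℂ) × ℂ be an open set containing (θ₀, 0), and let s : (Fin m → ℂ) × ℂ → (Fin n → ℂ) be complex-differentiable on W. Assume the fixed-point condition: for every (θ, β) ∈ W, the Fréchet derivative over ℂ of the map x ↦ E(θ, x) + β • ℓ(θ, x) at x = s(θ, β) is the zero continuous linear map. Define the objective L : (Fin m → ℂ) → ℂ by L(θ) = ℓ(θ, s(θ, 0)). Then the gradient formula of equilibrium propagation holds in the sense of complex differentiation: the derivative at β = 0 of the map β ↦ fderiv ℂ (fun θ' => E(θ', s(θ₀, β)) + β • ℓ(θ', s(θ₀, β))) θ₀ (a curve in the space of continuous ℂ-linear maps (Fin m → ℂ) →L[ℂ] ℂ) equals fderiv ℂ L θ₀. -/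
open Metric Set Filter Complex Real Topology

section EPAux

set_option maxHeartbeats 1000000

/-- Quantitative convergence of difference quotients to the Cauchy-integral derivative
candidate, for a holomorphic function on a closed disc. -/
private lemma ep_key_est {f : ℂ → ℂ} {r : ℝ} (hr : 0 < r)
    (hfd : DifferentiableOn ℂ f (closedBall 0 r)) {M : ℝ}
    (hM : ∀ τ ∈ closedBall (0:ℂ) r, ‖f τ‖ ≤ M) {t : ℂ} (ht : t ≠ 0) (htr : ‖t‖ ≤ r / 2) :
    ‖t⁻¹ * (f t - f 0) - (2 * π * I : ℂ)⁻¹ * (∮ τ in C(0, r), (τ ^ 2)⁻¹ • f τ)‖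
      ≤ 2 * M / r ^ 2 * ‖t‖ := by
  have h2πI : (2 * π * I : ℂ) ≠ 0 := by
    simp [Real.pi_ne_zero, I_ne_zero, Complex.ext_iff, Real.pi_pos.ne']
  have httr : ‖t‖ < r := by linarith
  have ht_ball : t ∈ ball (0:ℂ) r := by simpa [mem_ball_zero_iff] using httr
  have h0_ball : (0:ℂ) ∈ ball (0:ℂ) r := mem_ball_self hr
  have hC1 := hfd.circleIntegral_sub_inv_smul ht_ball
  have hC0 := hfd.circleIntegral_sub_inv_smul h0_ball
  have hfc : ContinuousOn f (sphere (0:ℂ) r) :=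
    hfd.continuousOn.mono sphere_subset_closedBall
  have hτne : ∀ τ ∈ sphere (0:ℂ) r, τ ≠ 0 := by
    intro τ hτ h
    rw [mem_sphere_zero_iff_norm] at hτ
    rw [h] at hτ; simp at hτ; linarith
  have hτnet : ∀ τ ∈ sphere (0:ℂ) r, τ - t ≠ 0 := by
    intro τ hτ h
    rw [mem_sphere_zero_iff_norm] at hτ
    rw [sub_eq_zero] at h
    rw [h] at hτ; linarith
  have hi1 : CircleIntegrable (fun τ => (τ - t)⁻¹ • f τ) 0 r :=
    ContinuousOn.circleIntegrable hr.le
      (((continuousOn_id.sub continuousOn_const).inv₀ hτnet).smul hfc)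
  have hi0 : CircleIntegrable (fun τ => (τ - 0)⁻¹ • f τ) 0 r :=
    ContinuousOn.circleIntegrable hr.le
      (((continuousOn_id.sub continuousOn_const).inv₀ (by simpa using hτne)).smul hfc)
  have hi2 : CircleIntegrable (fun τ => (τ ^ 2)⁻¹ • f τ) 0 r :=
    ContinuousOn.circleIntegrable hr.le
      (((continuousOn_pow 2).inv₀ (fun τ hτ => pow_ne_zero 2 (hτne τ hτ))).smul hfc)
  have hi3 : CircleIntegrable (fun τ => t⁻¹ • ((τ - t)⁻¹ • f τ - (τ - 0)⁻¹ • f τ)) 0 r :=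
    ContinuousOn.circleIntegrable hr.le
      (((((continuousOn_id.sub continuousOn_const).inv₀ hτnet).smul hfc).sub
        (((continuousOn_id.sub continuousOn_const).inv₀
          (by simpa using hτne)).smul hfc)).const_smul t⁻¹)
  have hinner : (∮ τ in C(0, r), (t * ((τ - t)⁻¹ * (τ ^ 2)⁻¹)) • f τ)
      = t⁻¹ • ((∮ τ in C(0, r), (τ - t)⁻¹ • f τ) - ∮ τ in C(0, r), (τ - 0)⁻¹ • f τ)
        - ∮ τ in C(0, r), (τ ^ 2)⁻¹ • f τ := by
    rw [← circleIntegral.integral_sub hi1 hi0,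
      ← circleIntegral.integral_smul t⁻¹ _ _ _,
      ← circleIntegral.integral_sub hi3 hi2]
    refine circleIntegral.integral_congr hr.le fun τ hτ => ?_
    have h1 := hτne τ hτ
    have h2 := hτnet τ hτ
    simp only [smul_eq_mul]
    field_simp
    ring
  have hdiff : t⁻¹ * (f t - f 0) - (2 * π * I : ℂ)⁻¹ * (∮ τ in C(0, r), (τ ^ 2)⁻¹ • f τ)
      = (2 * π * I : ℂ)⁻¹ * (∮ τ in C(0, r), (t * ((τ - t)⁻¹ * (τ ^ 2)⁻¹)) • f τ) := by
    rw [hinner]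
    have h1 : f t = (2 * π * I : ℂ)⁻¹ * (∮ τ in C(0, r), (τ - t)⁻¹ • f τ) := by
      rw [hC1]; field_simp; simp only [smul_eq_mul]; ring
    have h2 : f 0 = (2 * π * I : ℂ)⁻¹ * (∮ τ in C(0, r), (τ - 0)⁻¹ • f τ) := by
      rw [hC0]; field_simp; simp only [smul_eq_mul]; ring
    rw [h1, h2]
    simp only [smul_eq_mul]
    ring
  rw [hdiff]
  have hbound : ‖∮ τ in C(0, r), (t * ((τ - t)⁻¹ * (τ ^ 2)⁻¹)) • f τ‖ ≤
      2 * π * r * (‖t‖ * ((r / 2)⁻¹ * (r ^ 2)⁻¹) * M) := by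
    refine circleIntegral.norm_integral_le_of_norm_le_const hr.le fun τ hτ => ?_
    have hτr : ‖τ‖ = r := mem_sphere_zero_iff_norm.mp hτ
    have hτt : r / 2 ≤ ‖τ - t‖ := by
      have := norm_sub_norm_le τ t
      rw [hτr] at this; linarith
    have hfτ : ‖f τ‖ ≤ M := hM τ (sphere_subset_closedBall hτ)
    have h1 : ‖(t * ((τ - t)⁻¹ * (τ ^ 2)⁻¹)) • f τ‖
        = ‖t‖ * ((‖τ - t‖)⁻¹ * ((r : ℝ) ^ 2)⁻¹) * ‖f τ‖ := by
      simp [norm_smul, norm_mul, norm_inv, norm_pow, hτr]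
    rw [h1]
    have h2 : (‖τ - t‖)⁻¹ ≤ (r / 2)⁻¹ := inv_anti₀ (by positivity) hτt
    gcongr
  rw [norm_mul]
  have hnorm2πI : ‖(2 * π * I : ℂ)⁻¹‖ = (2 * π)⁻¹ := by
    simp [norm_inv, Complex.norm_I, _root_.abs_of_nonneg Real.pi_nonneg, Real.pi_nonneg]
  rw [hnorm2πI]
  calc (2 * π)⁻¹ * ‖∮ τ in C(0, r), (t * ((τ - t)⁻¹ * (τ ^ 2)⁻¹)) • f τ‖
      ≤ (2 * π)⁻¹ * (2 * π * r * (‖t‖ * ((r / 2)⁻¹ * (r ^ 2)⁻¹) * M)) := by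
        have hpos : (0:ℝ) ≤ (2 * π)⁻¹ := by positivity
        exact mul_le_mul_of_nonneg_left hbound hpos
    _ = 2 * M / r ^ 2 * ‖t‖ := by
        field_simp

/-- Mixed partials swap for a differentiable function of two complex variables, assuming
the second partial derivative `P` of `K` is itself differentiable at the origin. -/
private lemma ep_mixed_deriv_core {K : ℂ × ℂ → ℂ} {U : Set (ℂ × ℂ)} (hU : IsOpen U)
    (h00 : ((0 : ℂ), (0 : ℂ)) ∈ U) (hK : DifferentiableOn ℂ K U) {g P : ℂ → ℂ}
    (hg : ∀ β : ℂ, ((0 : ℂ), β) ∈ U → HasDerivAt (fun t => K (t, β)) (g β) 0)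
    (hP : ∀ t : ℂ, (t, (0 : ℂ)) ∈ U → HasDerivAt (fun β => K (t, β)) (P t) 0)
    {d : ℂ} (hPd : HasDerivAt P d 0) :
    HasDerivAt g d 0 := by
  obtain ⟨ε, hε, hballs⟩ := Metric.isOpen_iff.mp hU (0, 0) h00
  set r : ℝ := ε / 2 with hrdef
  have hr : 0 < r := by positivity
  have hsub : closedBall (0 : ℂ) r ×ˢ closedBall (0 : ℂ) r ⊆ U := by
    rw [closedBall_prod_same]
    refine (closedBall_subset_ball ?_).trans hballs
    rw [hrdef]; linarith
  have hKc : ContinuousOn K (closedBall (0 : ℂ) r ×ˢ closedBall (0 : ℂ) r) :=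
    hK.continuousOn.mono hsub
  obtain ⟨M, hM⟩ := ((isCompact_closedBall (0:ℂ) r).prod
    (isCompact_closedBall (0:ℂ) r)).exists_bound_of_continuousOn hKc
  have hM0 : 0 ≤ M :=
    le_trans (norm_nonneg _) (hM (0, 0) ⟨mem_closedBall_self hr.le, mem_closedBall_self hr.le⟩)
  have hslice : ∀ β ∈ closedBall (0:ℂ) r,
      DifferentiableOn ℂ (fun τ => K (τ, β)) (closedBall (0:ℂ) r) := fun β hβ =>
    hK.comp ((differentiable_id.prodMk (differentiable_const β)).differentiableOn)
      (fun τ hτ => hsub (Set.mk_mem_prod hτ hβ))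
  have hβslice : ∀ t ∈ closedBall (0:ℂ) r,
      DifferentiableOn ℂ (fun β => K (t, β)) (closedBall (0:ℂ) r) := fun t ht =>
    hK.comp (((differentiable_const t).prodMk differentiable_id).differentiableOn)
      (fun β hβ => hsub (Set.mk_mem_prod ht hβ))
  set Φ : ℂ → ℂ → ℂ := fun t β => t⁻¹ • (K (t, β) - K (0, β)) with hΦdef
  set G : ℂ → ℂ := fun β => (2 * π * I : ℂ)⁻¹ * (∮ τ in C(0, r), (τ ^ 2)⁻¹ • K (τ, β))
    with hGdef
  have hTU : TendstoUniformlyOn Φ G (𝓝[≠] (0:ℂ)) (closedBall (0:ℂ) r) := by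
    rw [Metric.tendstoUniformlyOn_iff]
    intro δ hδ
    set Cb : ℝ := 2 * M / r ^ 2 with hCbdef
    have hCb0 : 0 ≤ Cb := by positivity
    have hδ' : 0 < min (r / 2) (δ / (Cb + 1)) := by positivity
    have h1 : ∀ᶠ t : ℂ in 𝓝 (0:ℂ), ‖t‖ < min (r / 2) (δ / (Cb + 1)) := by
      filter_upwards [Metric.ball_mem_nhds (0:ℂ) hδ'] with t ht
      simpa [mem_ball_zero_iff] using ht
    filter_upwards [h1.filter_mono nhdsWithin_le_nhds, self_mem_nhdsWithin] with t ht ht0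
    intro β hβ
    have hest := ep_key_est hr (hslice β hβ) (fun τ hτ => hM (τ, β) ⟨hτ, hβ⟩) ht0
      (le_of_lt (lt_of_lt_of_le ht (min_le_left _ _)))
    rw [dist_eq_norm, norm_sub_rev]
    have heq : Φ t β - G β = t⁻¹ * (K (t, β) - K (0, β))
        - (2 * π * I : ℂ)⁻¹ * (∮ τ in C(0, r), (τ ^ 2)⁻¹ • K (τ, β)) := by
      simp [hΦdef, hGdef, smul_eq_mul]
    rw [heq]
    calc ‖t⁻¹ * (K (t, β) - K (0, β))
          - (2 * π * I : ℂ)⁻¹ * (∮ τ in C(0, r), (τ ^ 2)⁻¹ • K (τ, β))‖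
        ≤ Cb * ‖t‖ := hest
      _ ≤ (Cb + 1) * ‖t‖ := by nlinarith [norm_nonneg t]
      _ < (Cb + 1) * (δ / (Cb + 1)) := by
          have h2 : ‖t‖ < δ / (Cb + 1) := lt_of_lt_of_le ht (min_le_right _ _)
          have h3 : ‖t‖ ≠ 0 := norm_ne_zero_iff.mpr ht0
          exact mul_lt_mul_of_pos_left h2 (by linarith)
      _ = δ := by field_simp
  have hTL : TendstoLocallyUniformlyOn Φ G (𝓝[≠] (0:ℂ)) (ball (0:ℂ) r) :=
    (hTU.tendstoLocallyUniformlyOn).mono ball_subset_closedBall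
  have hptw : ∀ β ∈ ball (0:ℂ) r, Tendsto (fun t => Φ t β) (𝓝[≠] (0:ℂ)) (𝓝 (g β)) := by
    intro β hβ
    have hmemU : ((0:ℂ), β) ∈ U :=
      hsub (Set.mk_mem_prod (mem_closedBall_self hr.le) (ball_subset_closedBall hβ))
    have h := hasDerivAt_iff_tendsto_slope.mp (hg β hmemU)
    refine h.congr fun t => ?_
    simp [slope_def_field, hΦdef, smul_eq_mul, div_eq_inv_mul]
  have hGg : ∀ β ∈ ball (0:ℂ) r, G β = g β := fun β hβ =>
    tendsto_nhds_unique (hTU.tendsto_at (ball_subset_closedBall hβ)) (hptw β hβ)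
  have hΦd : ∀ᶠ t in 𝓝[≠] (0:ℂ), DifferentiableOn ℂ (Φ t) (ball (0:ℂ) r) := by
    have h1 : ∀ᶠ t : ℂ in 𝓝 (0:ℂ), ‖t‖ < r := by
      filter_upwards [Metric.ball_mem_nhds (0:ℂ) hr] with t ht
      simpa [mem_ball_zero_iff] using ht
    filter_upwards [h1.filter_mono nhdsWithin_le_nhds] with t ht
    have h2 : t ∈ closedBall (0:ℂ) r := by simpa [mem_closedBall_zero_iff] using ht.le
    exact ((((hβslice t h2).sub (hβslice 0 (mem_closedBall_self hr.le))).const_smul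
      t⁻¹).mono ball_subset_closedBall)
  have hGdiff : DifferentiableOn ℂ G (ball (0:ℂ) r) := hTL.differentiableOn hΦd isOpen_ball
  have hderconv : Tendsto (fun t => deriv (Φ t) 0) (𝓝[≠] (0:ℂ)) (𝓝 (deriv G 0)) :=
    (hTL.deriv hΦd isOpen_ball).tendsto_at (mem_ball_self hr)
  have hΦderiv : ∀ᶠ t in 𝓝[≠] (0:ℂ), deriv (Φ t) 0 = t⁻¹ • (P t - P 0) := by
    have h1 : ∀ᶠ t : ℂ in 𝓝 (0:ℂ), ‖t‖ < r := by
      filter_upwards [Metric.ball_mem_nhds (0:ℂ) hr] with t ht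
      simpa [mem_ball_zero_iff] using ht
    filter_upwards [h1.filter_mono nhdsWithin_le_nhds] with t ht
    have h2 : (t, (0:ℂ)) ∈ U :=
      hsub (Set.mk_mem_prod (by simpa [mem_closedBall_zero_iff] using ht.le)
        (mem_closedBall_self hr.le))
    exact (((hP t h2).sub (hP 0 h00)).const_smul t⁻¹).deriv
  have hslopeP : Tendsto (fun t : ℂ => t⁻¹ • (P t - P 0)) (𝓝[≠] (0:ℂ)) (𝓝 d) := by
    have h := hasDerivAt_iff_tendsto_slope.mp hPd
    refine h.congr fun t => ?_
    simp [slope_def_field, smul_eq_mul, div_eq_inv_mul]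
  have hderG : deriv G 0 = d :=
    tendsto_nhds_unique (hderconv.congr' hΦderiv) hslopeP
  have hGhas : HasDerivAt G d 0 := by
    have h := (hGdiff.differentiableAt (isOpen_ball.mem_nhds (mem_ball_self hr))).hasDerivAt
    rwa [hderG] at h
  refine hGhas.congr_of_eventuallyEq ?_
  filter_upwards [isOpen_ball.mem_nhds (mem_ball_self hr)] with β hβ
  exact (hGg β hβ).symm

/-- Directional version of holomorphic equilibrium propagation. -/
private lemma ep_directional
    {m n : ℕ}
    (E ℓ : (Fin m → ℂ) × (Fin n → ℂ) → ℂ)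
    (hE : Differentiable ℂ E) (hℓ : Differentiable ℂ ℓ)
    (W : Set ((Fin m → ℂ) × ℂ)) (hW : IsOpen W)
    (θ₀ : Fin m → ℂ) (hmem : (θ₀, (0 : ℂ)) ∈ W)
    (s : (Fin m → ℂ) × ℂ → (Fin n → ℂ))
    (hs : DifferentiableOn ℂ s W)
    (hfix : ∀ p ∈ W,
      fderiv ℂ (fun x => E (p.1, x) + p.2 • ℓ (p.1, x)) (s p) = 0)
    (L : (Fin m → ℂ) → ℂ) (hL : L = fun θ => ℓ (θ, s (θ, 0)))
    (v : Fin m → ℂ) :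
    HasDerivAt (fun β : ℂ =>
        fderiv ℂ (fun θ' => E (θ', s (θ₀, β)) + β • ℓ (θ', s (θ₀, β))) θ₀ v)
      (fderiv ℂ L θ₀ v) 0 := by
  subst hL
  set L : (Fin m → ℂ) → ℂ := fun θ => ℓ (θ, s (θ, 0)) with hLdef
  -- the ambient open set and the two-variable function
  set σ : ℂ × ℂ → (Fin m → ℂ) × ℂ := fun q => (θ₀ + q.1 • v, q.2) with hσdef
  have hσd : Differentiable ℂ σ :=
    ((differentiable_const θ₀).add (differentiable_fst.smul_const v)).prodMk differentiable_snd
  set U : Set (ℂ × ℂ) := σ ⁻¹' W with hUdef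
  have hU : IsOpen U := hW.preimage hσd.continuous
  have hz : θ₀ + (0:ℂ) • v = θ₀ := by simp
  have h00 : ((0:ℂ), (0:ℂ)) ∈ U := by
    show σ (0, 0) ∈ W
    simp only [hσdef, hz]
    exact hmem
  set K : ℂ × ℂ → ℂ := fun q =>
    E (θ₀ + q.1 • v, s (θ₀ + q.1 • v, q.2)) + q.2 • ℓ (θ₀ + q.1 • v, s (θ₀ + q.1 • v, q.2))
    with hKdef
  have hsd : DifferentiableOn ℂ (fun q : ℂ × ℂ => s (θ₀ + q.1 • v, q.2)) U :=
    hs.comp hσd.differentiableOn (fun q hq => hq)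
  have hpaird : DifferentiableOn ℂ
      (fun q : ℂ × ℂ => ((θ₀ + q.1 • v, s (θ₀ + q.1 • v, q.2)) :
        (Fin m → ℂ) × (Fin n → ℂ))) U :=
    (((differentiable_const θ₀).add (differentiable_fst.smul_const v)).differentiableOn).prodMk hsd
  have hK : DifferentiableOn ℂ K U := by
    refine DifferentiableOn.add (hE.comp_differentiableOn hpaird) ?_
    exact (differentiable_snd.differentiableOn).smul (hℓ.comp_differentiableOn hpaird)
  -- the t-partial derivative at (0, β)
  have hg : ∀ β : ℂ, ((0:ℂ), β) ∈ U → HasDerivAt (fun t => K (t, β))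
      (fderiv ℂ (fun θ' => E (θ', s (θ₀, β)) + β • ℓ (θ', s (θ₀, β))) θ₀ v) 0 := by
    intro β hβU
    have hp : (θ₀, β) ∈ W := by
      have : σ (0, β) ∈ W := hβU
      simpa only [hσdef, hz] using this
    set x := s (θ₀, β) with hx
    have hline : HasDerivAt (fun t : ℂ => θ₀ + t • v) v 0 := by
      simpa using ((hasDerivAt_id (0:ℂ)).smul_const v).const_add θ₀
    have hsA : DifferentiableAt ℂ s (θ₀, β) := hs.differentiableAt (hW.mem_nhds hp)
    set S := fderiv ℂ s (θ₀, β) with hS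
    have hpair : HasDerivAt (fun t : ℂ => (θ₀ + t • v, β)) (v, (0:ℂ)) 0 :=
      hline.prodMk (hasDerivAt_const 0 β)
    have hy : HasDerivAt (fun t : ℂ => s (θ₀ + t • v, β)) (S (v, 0)) 0 := by
      have h' : HasFDerivAt s S (θ₀ + (0:ℂ) • v, β) := by rw [hz]; exact hsA.hasFDerivAt
      exact h'.comp_hasDerivAt 0 hpair
    set yd := S (v, 0) with hyd
    have hpE : HasDerivAt (fun t : ℂ => (θ₀ + t • v, s (θ₀ + t • v, β)))
        ((v, yd) : (Fin m → ℂ) × (Fin n → ℂ)) 0 := hline.prodMk hy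
    have hEt : HasDerivAt (fun t : ℂ => E (θ₀ + t • v, s (θ₀ + t • v, β)))
        (fderiv ℂ E (θ₀, x) (v, yd)) 0 := by
      have h' : HasFDerivAt E (fderiv ℂ E (θ₀, x)) (θ₀ + (0:ℂ) • v, s (θ₀ + (0:ℂ) • v, β)) := by
        rw [hz]; exact (hE (θ₀, x)).hasFDerivAt
      exact h'.comp_hasDerivAt 0 hpE
    have hlt : HasDerivAt (fun t : ℂ => ℓ (θ₀ + t • v, s (θ₀ + t • v, β)))
        (fderiv ℂ ℓ (θ₀, x) (v, yd)) 0 := by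
      have h' : HasFDerivAt ℓ (fderiv ℂ ℓ (θ₀, x)) (θ₀ + (0:ℂ) • v, s (θ₀ + (0:ℂ) • v, β)) := by
        rw [hz]; exact (hℓ (θ₀, x)).hasFDerivAt
      exact h'.comp_hasDerivAt 0 hpE
    have htot := hEt.add (hlt.const_smul β)
    have hval : fderiv ℂ E (θ₀, x) (v, yd) + β • fderiv ℂ ℓ (θ₀, x) (v, yd)
        = fderiv ℂ (fun θ' => E (θ', x) + β • ℓ (θ', x)) θ₀ v := by
      have hA : fderiv ℂ (fun θ' => E (θ', x) + β • ℓ (θ', x)) θ₀ =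
          ((fderiv ℂ E (θ₀, x)).comp (ContinuousLinearMap.inl ℂ _ _))
            + β • ((fderiv ℂ ℓ (θ₀, x)).comp (ContinuousLinearMap.inl ℂ _ _)) := by
        have h1 : HasFDerivAt (fun θ' : Fin m → ℂ => E (θ', x))
            ((fderiv ℂ E (θ₀, x)).comp (ContinuousLinearMap.inl ℂ _ _)) θ₀ :=
          (hE (θ₀, x)).hasFDerivAt.comp θ₀ (hasFDerivAt_prodMk_left θ₀ x)
        have h2 : HasFDerivAt (fun θ' : Fin m → ℂ => ℓ (θ', x))
            ((fderiv ℂ ℓ (θ₀, x)).comp (ContinuousLinearMap.inl ℂ _ _)) θ₀ :=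
          (hℓ (θ₀, x)).hasFDerivAt.comp θ₀ (hasFDerivAt_prodMk_left θ₀ x)
        exact (h1.add (h2.const_smul β)).fderiv
      have hzero : fderiv ℂ E (θ₀, x) (0, yd) + β • fderiv ℂ ℓ (θ₀, x) (0, yd) = 0 := by
        have h1 : HasFDerivAt (fun x' => E (θ₀, x'))
            ((fderiv ℂ E (θ₀, x)).comp (ContinuousLinearMap.inr ℂ _ _)) x :=
          (hE _).hasFDerivAt.comp _ (hasFDerivAt_prodMk_right θ₀ x)
        have h2 : HasFDerivAt (fun x' => ℓ (θ₀, x'))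
            ((fderiv ℂ ℓ (θ₀, x)).comp (ContinuousLinearMap.inr ℂ _ _)) x :=
          (hℓ _).hasFDerivAt.comp _ (hasFDerivAt_prodMk_right θ₀ x)
        have h3 := (h1.add (h2.const_smul β)).fderiv
        have h4 : (((fderiv ℂ E (θ₀, x)).comp (ContinuousLinearMap.inr ℂ _ _))
            + β • ((fderiv ℂ ℓ (θ₀, x)).comp (ContinuousLinearMap.inr ℂ _ _))) = 0 := by
          rw [← h3]; exact hfix (θ₀, β) hp
        simpa using DFunLike.congr_fun h4 yd
      rw [hA]
      have hsplit : ((v, yd) : (Fin m → ℂ) × (Fin n → ℂ)) = (v, 0) + (0, yd) := by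
        simp [Prod.ext_iff]
      simp only [ContinuousLinearMap.add_apply, ContinuousLinearMap.coe_smul',
        Pi.smul_apply, ContinuousLinearMap.coe_comp', Function.comp_apply,
        ContinuousLinearMap.inl_apply, hsplit, map_add, smul_add]
      linear_combination (norm := ring_nf) hzero
    rw [← hx] at *
    exact hval ▸ htot
  -- the β-partial derivative at (t, 0)
  have hPm : ∀ t : ℂ, (t, (0:ℂ)) ∈ U → HasDerivAt (fun β => K (t, β)) (L (θ₀ + t • v)) 0 := by
    intro t htU
    have hp : (θ₀ + t • v, (0:ℂ)) ∈ W := htU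
    set c : Fin m → ℂ := θ₀ + t • v with hc
    set x₀ := s (c, 0) with hx0
    have hsA : DifferentiableAt ℂ s (c, (0:ℂ)) := hs.differentiableAt (hW.mem_nhds hp)
    set S := fderiv ℂ s (c, (0:ℂ)) with hS
    have hpair : HasDerivAt (fun β : ℂ => ((c, β) : (Fin m → ℂ) × ℂ)) (0, (1:ℂ)) 0 :=
      (hasDerivAt_const 0 c).prodMk (hasDerivAt_id 0)
    have hy : HasDerivAt (fun β : ℂ => s (c, β)) (S (0, 1)) 0 :=
      hsA.hasFDerivAt.comp_hasDerivAt 0 hpair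
    set w := S (0, 1) with hw
    have hpE : HasDerivAt (fun β : ℂ => ((c, s (c, β)) : (Fin m → ℂ) × (Fin n → ℂ)))
        (0, w) 0 := (hasDerivAt_const 0 c).prodMk hy
    have hEt : HasDerivAt (fun β : ℂ => E (c, s (c, β))) (fderiv ℂ E (c, x₀) (0, w)) 0 :=
      (hE (c, x₀)).hasFDerivAt.comp_hasDerivAt 0 hpE
    have hEzero : fderiv ℂ E (c, x₀) (0, w) = 0 := by
      have h1 : HasFDerivAt (fun x' => E (c, x'))
          ((fderiv ℂ E (c, x₀)).comp (ContinuousLinearMap.inr ℂ _ _)) x₀ :=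
        (hE _).hasFDerivAt.comp _ (hasFDerivAt_prodMk_right c x₀)
      have h2 := hfix (c, 0) hp
      simp only [zero_smul, add_zero] at h2
      have h3 : ((fderiv ℂ E (c, x₀)).comp (ContinuousLinearMap.inr ℂ _ _)) = 0 := by
        rw [← h1.fderiv]; exact h2
      simpa using DFunLike.congr_fun h3 w
    have hm' : HasDerivAt (fun β : ℂ => ℓ (c, s (c, β))) (fderiv ℂ ℓ (c, x₀) (0, w)) 0 :=
      (hℓ (c, x₀)).hasFDerivAt.comp_hasDerivAt 0 hpE
    have hsm : HasDerivAt (fun β : ℂ => β • ℓ (c, s (c, β))) (ℓ (c, s (c, 0))) 0 := by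
      have h := (hasDerivAt_id (0:ℂ)).smul hm'
      exact h.congr_deriv (by simp)
    have h := hEt.add hsm
    exact h.congr_deriv (by simp [hEzero, hLdef])
  -- the objective along the line
  have hPd : HasDerivAt (fun t : ℂ => L (θ₀ + t • v)) (fderiv ℂ L θ₀ v) 0 := by
    have hLd : DifferentiableAt ℂ L θ₀ := by
      refine (hℓ _).comp θ₀ (differentiableAt_id.prodMk ?_)
      exact (hs.differentiableAt (hW.mem_nhds hmem)).comp θ₀
        (differentiableAt_id.prodMk (differentiableAt_const 0))
    have hline : HasDerivAt (fun t : ℂ => θ₀ + t • v) v 0 := by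
      simpa using ((hasDerivAt_id (0:ℂ)).smul_const v).const_add θ₀
    have h' : HasFDerivAt L (fderiv ℂ L θ₀) (θ₀ + (0:ℂ) • v) := by
      rw [hz]; exact hLd.hasFDerivAt
    exact h'.comp_hasDerivAt 0 hline
  exact ep_mixed_deriv_core hU h00 hK hg hPm hPd

end EPAux

/-- Holomorphic Equilibrium Propagation (Lemma 1): for total energy
`F(θ, x, β) = E(θ, x) + β • ℓ(θ, x)` with holomorphic `E`, `ℓ` and a holomorphic
fixed-point map `s`, the derivative at `β = 0` of the θ-partial derivative of the
total energy evaluated at the fixed point equals the gradient of the objective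
`L(θ) = ℓ(θ, s(θ, 0))`. -/
theorem holomorphic_equilibrium_propagation
    {m n : ℕ}
    (E ℓ : (Fin m → ℂ) × (Fin n → ℂ) → ℂ)
    (hE : Differentiable ℂ E) (hℓ : Differentiable ℂ ℓ)
    (W : Set ((Fin m → ℂ) × ℂ)) (hW : IsOpen W)
    (θ₀ : Fin m → ℂ) (hmem : (θ₀, (0 : ℂ)) ∈ W)
    (s : (Fin m → ℂ) × ℂ → (Fin n → ℂ))
    (hs : DifferentiableOn ℂ s W)
    (hfix : ∀ p ∈ W,
      fderiv ℂ (fun x => E (p.1, x) + p.2 • ℓ (p.1, x)) (s p) = 0)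
    (L : (Fin m → ℂ) → ℂ) (hL : L = fun θ => ℓ (θ, s (θ, 0))) :
    deriv (fun β : ℂ =>
        fderiv ℂ (fun θ' => E (θ', s (θ₀, β)) + β • ℓ (θ', s (θ₀, β))) θ₀) 0
      = fderiv ℂ L θ₀ := by
  set A : ℂ → ((Fin m → ℂ) →L[ℂ] ℂ) := fun β =>
    fderiv ℂ (fun θ' => E (θ', s (θ₀, β)) + β • ℓ (θ', s (θ₀, β))) θ₀ with hAdef
  set D : (Fin m → ℂ) →L[ℂ] ℂ := fderiv ℂ L θ₀ with hDdef
  -- expand any continuous linear functional over the standard basis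
  have hexp : ∀ T : (Fin m → ℂ) →L[ℂ] ℂ,
      T = ∑ i : Fin m, T (Pi.single i 1) •
        (ContinuousLinearMap.proj i : (Fin m → ℂ) →L[ℂ] ℂ) := by
    intro T
    ext x
    have hx : x = ∑ i : Fin m, x i • (Pi.single i (1:ℂ) : Fin m → ℂ) := by
      have h1 : ∀ i : Fin m, x i • (Pi.single i (1:ℂ) : Fin m → ℂ) = Pi.single i (x i) := by
        intro i
        funext j
        rcases eq_or_ne j i with h | h <;>
          simp [Pi.single_apply, h, smul_eq_mul]
      simp_rw [h1]
      exact (Finset.univ_sum_single x).symm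
    conv_lhs => rw [hx]
    rw [map_sum]
    simp only [map_smul, ContinuousLinearMap.sum_apply, ContinuousLinearMap.smul_apply,
      ContinuousLinearMap.proj_apply, smul_eq_mul]
    exact Finset.sum_congr rfl fun i _ => mul_comm _ _
  -- derivative of each coefficient
  have hdir : ∀ i : Fin m, HasDerivAt (fun β => A β (Pi.single i (1:ℂ)))
      (D (Pi.single i 1)) 0 := fun i =>
    ep_directional E ℓ hE hℓ W hW θ₀ hmem s hs hfix L hL (Pi.single i 1)
  have hsum : HasDerivAt
      (fun β => ∑ i : Fin m, (A β (Pi.single i 1)) •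
        (ContinuousLinearMap.proj i : (Fin m → ℂ) →L[ℂ] ℂ))
      (∑ i : Fin m, D (Pi.single i 1) •
        (ContinuousLinearMap.proj i : (Fin m → ℂ) →L[ℂ] ℂ)) 0 :=
    HasDerivAt.fun_sum fun i _ => (hdir i).smul_const (ContinuousLinearMap.proj i : (Fin m → ℂ) →L[ℂ] ℂ)
  have hA : HasDerivAt A D 0 := by
    have hfun : (fun β => ∑ i : Fin m, (A β (Pi.single i 1)) •
        (ContinuousLinearMap.proj i : (Fin m → ℂ) →L[ℂ] ℂ)) = A := by
      funext β
      exact (hexp (A β)).symm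
    rw [hfun, ← hexp D] at hsum
    exact hsum
  exact hA.deriv
end

section
/- Let E, ℓ : (Fin m → ℂ) × (Fin n → ℂ) → ℂ be complex-differentiable (holomorphic) on an open set, let W ⊆ (Fin m → ℂ) × ℂ be an open set, let s : (Fin m → ℂ) × ℂ → (Fin n → ℂ) be complex-differentiable on W, and assume that for every (θ, β) ∈ W the Fréchet derivative over ℂ of x ↦ E(θ, x) + β • ℓ(θ, x) at x = s(θ, β) vanishes. Define L(θ) = ℓ(θ, s(θ, 0)). Let r > 0 and T > 0 be such that {θ₀} × {β : ℂ | ‖β‖ ≤ r} ⊆ W, and set β(t) = r·exp(2πi t / T). Then fderiv ℂ L θ₀ = (1/(T·r)) · ∫_{t=0}^{T} (fderiv ℂ (fun θ' => E(θ', s(θ₀, β(t))) + β(t) • ℓ(θ', s(θ₀, β(t)))) θ₀) · exp(−2πi t / T) dt, where the integral is the Bochner integral of a continuous curve in the space (Fin m → ℂ) →L[ℂ] ℂ. -/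
open scoped Real
open Metric Set MeasureTheory intervalIntegral Complex

namespace HoloEP


lemma clm_eq_sum_proj {m : ℕ} (B : (Fin m → ℂ) →L[ℂ] ℂ) :
    B = ∑ i, B (Pi.single i (1:ℂ)) • (ContinuousLinearMap.proj i : ((Fin m → ℂ)) →L[ℂ] ℂ) := by
  ext x
  have hx : x = ∑ i, x i • (Pi.single i (1:ℂ) : Fin m → ℂ) := by
    funext j
    simp [Finset.sum_apply, Pi.single_apply]
  conv_lhs => rw [hx]
  rw [map_sum]
  simp [mul_comm]

lemma circleInt_eq {h : ℂ → ℂ} (c : ℂ) (R : ℝ) :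
    (∮ z in C(c, R), (z - c) ^ (-2 : ℤ) • h z)
      = ∫ t in (0:ℝ)..2 * π,
          (deriv (circleMap c R) t * (circleMap c R t - c) ^ (-2 : ℤ)) • h (circleMap c R t) := by
  rw [circleIntegral]
  refine intervalIntegral.integral_congr fun t ht => ?_
  rw [smul_smul]

lemma deriv_eq_smul_circleIntegral_old {R : ℝ} {c : ℂ} {f : ℂ → ℂ} (h0 : 0 < R)
    (hc : DiffContOnCl ℂ f (ball c R)) :
    deriv f c = (2 * π * I)⁻¹ • ∮ z in C(c, R), (z - c) ^ (-2 : ℤ) • f z := by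
  have h := hc.deriv_eq_smul_circleIntegral h0
  have e : (∮ z in C(c, R), (z - c) ^ (-2 : ℤ) • f z)
      = ∮ z in C(c, R), (1 / (z - c) ^ 2) • f z := by
    congr 1
    funext z
    rw [zpow_neg, zpow_ofNat, one_div]
  rw [e, h, smul_smul, inv_mul_cancel₀ (by simp [Real.pi_ne_zero, Complex.I_ne_zero]), one_smul]

lemma mem_of_thick {r ε : ℝ} (hr : 0 < r) (hε : 0 < ε) {z b : ℂ} (hz : ‖z‖ ≤ ε)
    (hb : ‖b‖ ≤ r + ε) :
    (z, b) ∈ cthickening ε (({(0:ℂ)} : Set ℂ) ×ˢ closedBall (0:ℂ) r) := by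
  by_cases h : ‖b‖ ≤ r
  · refine Metric.mem_cthickening_of_dist_le (z, b) (0, b) ε _ ?_ ?_
    · exact ⟨rfl, by simpa using h⟩
    · rw [Prod.dist_eq]
      simp only [dist_self, dist_zero_right]
      exact max_le hz hε.le
  · push_neg at h
    have hb0 : (0:ℝ) < ‖b‖ := lt_trans hr h
    set b' : ℂ := (r / ‖b‖ : ℝ) • b with hb'
    have hb'mem : b' ∈ closedBall (0:ℂ) r := by
      rw [mem_closedBall, dist_zero_right, hb', norm_smul]
      rw [Real.norm_eq_abs, _root_.abs_of_nonneg (div_nonneg hr.le (norm_nonneg _))]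
      rw [div_mul_cancel₀ _ hb0.ne']
    refine Metric.mem_cthickening_of_dist_le (z, b) (0, b') ε _ ?_ ?_
    · exact ⟨rfl, hb'mem⟩
    · rw [Prod.dist_eq]
      have hsub : b - b' = ((1 - r / ‖b‖ : ℝ)) • b := by
        rw [sub_smul, one_smul, hb']
      have hd2 : dist b b' = ‖b‖ - r := by
        rw [dist_eq_norm, hsub, norm_smul, Real.norm_eq_abs,
          _root_.abs_of_nonneg (by rw [sub_nonneg]; exact div_le_one_of_le₀ h.le (norm_nonneg _)),
          sub_mul, one_mul, div_mul_cancel₀ _ hb0.ne']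
      simp only [dist_zero_right]
      rw [hd2]
      exact max_le hz (by linarith)



variable {m n : ℕ}

lemma G_diff (E ℓ : (Fin m → ℂ) × (Fin n → ℂ) → ℂ) (hE : Differentiable ℂ E)
    (hℓ : Differentiable ℂ ℓ) :
    Differentiable ℂ (fun q : ((Fin m → ℂ) × ℂ) × (Fin n → ℂ) =>
      E (q.1.1, q.2) + q.1.2 • ℓ (q.1.1, q.2)) := by
  have hπ : Differentiable ℂ (fun q : ((Fin m → ℂ) × ℂ) × (Fin n → ℂ) =>
      ((q.1.1, q.2) : (Fin m → ℂ) × (Fin n → ℂ))) :=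
    (differentiable_fst.comp differentiable_fst).prodMk differentiable_snd
  exact (hE.comp hπ).add ((differentiable_snd.comp differentiable_fst).fun_smul (hℓ.comp hπ))

lemma hasFDerivAt_total (E ℓ : (Fin m → ℂ) × (Fin n → ℂ) → ℂ)
    (hE : Differentiable ℂ E) (hℓ : Differentiable ℂ ℓ)
    {W : Set ((Fin m → ℂ) × ℂ)} (hW : IsOpen W)
    {s : (Fin m → ℂ) × ℂ → Fin n → ℂ} (hs : DifferentiableOn ℂ s W)
    (hfix : ∀ p ∈ W, fderiv ℂ (fun x => E (p.1, x) + p.2 • ℓ (p.1, x)) (s p) = 0)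
    {p : (Fin m → ℂ) × ℂ} (hp : p ∈ W) :
    HasFDerivAt (fun q : (Fin m → ℂ) × ℂ => E (q.1, s q) + q.2 • ℓ (q.1, s q))
      ((fderiv ℂ (fun q : ((Fin m → ℂ) × ℂ) × (Fin n → ℂ) =>
          E (q.1.1, q.2) + q.1.2 • ℓ (q.1.1, q.2)) (p, s p)).comp
        (ContinuousLinearMap.inl ℂ ((Fin m → ℂ) × ℂ) (Fin n → ℂ))) p := by
  have hG := G_diff E ℓ hE hℓ
  set K := fderiv ℂ (fun q : ((Fin m → ℂ) × ℂ) × (Fin n → ℂ) =>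
      E (q.1.1, q.2) + q.1.2 • ℓ (q.1.1, q.2)) (p, s p) with hK
  have hsp : DifferentiableAt ℂ s p := hs.differentiableAt (hW.mem_nhds hp)
  have hGp : HasFDerivAt (fun q : ((Fin m → ℂ) × ℂ) × (Fin n → ℂ) =>
      E (q.1.1, q.2) + q.1.2 • ℓ (q.1.1, q.2)) K (p, s p) := (hG _).hasFDerivAt
  have hA : HasFDerivAt (fun q : (Fin m → ℂ) × ℂ =>
        ((q, s q) : ((Fin m → ℂ) × ℂ) × (Fin n → ℂ)))
      ((ContinuousLinearMap.id ℂ _).prod (fderiv ℂ s p)) p :=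
    (hasFDerivAt_id p).prodMk hsp.hasFDerivAt
  have hcomp : HasFDerivAt (fun q : (Fin m → ℂ) × ℂ => E (q.1, s q) + q.2 • ℓ (q.1, s q))
      (K.comp ((ContinuousLinearMap.id ℂ _).prod (fderiv ℂ s p))) p := hGp.comp p hA
  have hKinr : K.comp (ContinuousLinearMap.inr ℂ ((Fin m → ℂ) × ℂ) (Fin n → ℂ)) = 0 := by
    have hcurve := hasFDerivAt_prodMk_right (𝕜 := ℂ) p (s p)
    have h2 : HasFDerivAt (fun x : Fin n → ℂ => E (p.1, x) + p.2 • ℓ (p.1, x))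
        (K.comp (ContinuousLinearMap.inr ℂ _ _)) (s p) := hGp.comp (s p) hcurve
    exact h2.fderiv.symm.trans (hfix p hp)
  have heq : K.comp ((ContinuousLinearMap.id ℂ ((Fin m → ℂ) × ℂ)).prod (fderiv ℂ s p))
      = K.comp (ContinuousLinearMap.inl ℂ ((Fin m → ℂ) × ℂ) (Fin n → ℂ)) := by
    refine ContinuousLinearMap.ext fun w => ?_
    have h0 : K ((0 : (Fin m → ℂ) × ℂ), fderiv ℂ s p w) = 0 := by
      have := DFunLike.congr_fun hKinr (fderiv ℂ s p w)
      simpa using this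
    simp only [ContinuousLinearMap.comp_apply, ContinuousLinearMap.prod_apply,
      ContinuousLinearMap.coe_id', id_eq, ContinuousLinearMap.inl_apply]
    have hsplit : ((w, fderiv ℂ s p w) : ((Fin m → ℂ) × ℂ) × (Fin n → ℂ))
        = (w, 0) + (0, fderiv ℂ s p w) := by simp
    rw [hsplit, map_add, h0, add_zero]
  rw [heq] at hcomp
  exact hcomp

lemma G_deriv_beta (E ℓ : (Fin m → ℂ) × (Fin n → ℂ) → ℂ)
    (hE : Differentiable ℂ E) (hℓ : Differentiable ℂ ℓ)
    (θ : Fin m → ℂ) (b : ℂ) (c : Fin n → ℂ) :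
    fderiv ℂ (fun q : ((Fin m → ℂ) × ℂ) × (Fin n → ℂ) =>
        E (q.1.1, q.2) + q.1.2 • ℓ (q.1.1, q.2)) ((θ, b), c)
      (((0 : Fin m → ℂ), (1:ℂ)), (0 : Fin n → ℂ)) = ℓ (θ, c) := by
  have hG := G_diff E ℓ hE hℓ
  have hGp := (hG ((θ, b), c)).hasFDerivAt
  have hcurve : HasDerivAt (fun b' : ℂ => (((θ, b'), c) : ((Fin m → ℂ) × ℂ) × (Fin n → ℂ)))
      (((0 : Fin m → ℂ), (1:ℂ)), (0 : Fin n → ℂ)) b :=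
    (((hasDerivAt_const b θ).prodMk (hasDerivAt_id b))).prodMk (hasDerivAt_const b c)
  have h1 : HasDerivAt (fun b' : ℂ => E (θ, c) + b' • ℓ (θ, c))
      (fderiv ℂ (fun q : ((Fin m → ℂ) × ℂ) × (Fin n → ℂ) =>
        E (q.1.1, q.2) + q.1.2 • ℓ (q.1.1, q.2)) ((θ, b), c)
        (((0 : Fin m → ℂ), (1:ℂ)), (0 : Fin n → ℂ))) b :=
    hGp.comp_hasDerivAt b hcurve
  have h2 : HasDerivAt (fun b' : ℂ => E (θ, c) + b' • ℓ (θ, c)) (ℓ (θ, c)) b := by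
    have := ((hasDerivAt_id b).smul_const (ℓ (θ, c))).const_add (E (θ, c))
    simpa using this
  exact h1.unique h2

lemma G_deriv_theta (E ℓ : (Fin m → ℂ) × (Fin n → ℂ) → ℂ)
    (hE : Differentiable ℂ E) (hℓ : Differentiable ℂ ℓ)
    (θ : Fin m → ℂ) (b : ℂ) (c : Fin n → ℂ) :
    HasFDerivAt (fun θ' => E (θ', c) + b • ℓ (θ', c))
      (((fderiv ℂ (fun q : ((Fin m → ℂ) × ℂ) × (Fin n → ℂ) =>
            E (q.1.1, q.2) + q.1.2 • ℓ (q.1.1, q.2)) ((θ, b), c)).comp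
          (ContinuousLinearMap.inl ℂ ((Fin m → ℂ) × ℂ) (Fin n → ℂ))).comp
        (ContinuousLinearMap.inl ℂ (Fin m → ℂ) ℂ)) θ := by
  have hG := G_diff E ℓ hE hℓ
  have hGp := (hG ((θ, b), c)).hasFDerivAt
  have hcurve : HasFDerivAt (fun θ' : Fin m → ℂ =>
        (((θ', b), c) : ((Fin m → ℂ) × ℂ) × (Fin n → ℂ)))
      (((ContinuousLinearMap.id ℂ (Fin m → ℂ)).prod 0).prod 0) θ :=
    (((hasFDerivAt_id θ).prodMk (hasFDerivAt_const b θ))).prodMk (hasFDerivAt_const c θ)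
  have h1 : HasFDerivAt (fun θ' => E (θ', c) + b • ℓ (θ', c))
      ((fderiv ℂ (fun q : ((Fin m → ℂ) × ℂ) × (Fin n → ℂ) =>
          E (q.1.1, q.2) + q.1.2 • ℓ (q.1.1, q.2)) ((θ, b), c)).comp
        (((ContinuousLinearMap.id ℂ (Fin m → ℂ)).prod 0).prod 0)) θ :=
    hGp.comp θ hcurve
  have heq : (fderiv ℂ (fun q : ((Fin m → ℂ) × ℂ) × (Fin n → ℂ) =>
          E (q.1.1, q.2) + q.1.2 • ℓ (q.1.1, q.2)) ((θ, b), c)).comp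
        (((ContinuousLinearMap.id ℂ (Fin m → ℂ)).prod 0).prod 0)
      = ((fderiv ℂ (fun q : ((Fin m → ℂ) × ℂ) × (Fin n → ℂ) =>
            E (q.1.1, q.2) + q.1.2 • ℓ (q.1.1, q.2)) ((θ, b), c)).comp
          (ContinuousLinearMap.inl ℂ ((Fin m → ℂ) × ℂ) (Fin n → ℂ))).comp
        (ContinuousLinearMap.inl ℂ (Fin m → ℂ) ℂ) := by
    refine ContinuousLinearMap.ext fun w => ?_
    simp
  rw [heq] at h1
  exact h1



lemma engine {g : ℂ × ℂ → ℂ} {O : Set (ℂ × ℂ)} (hO : IsOpen O)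
    (hg : DifferentiableOn ℂ g O) {x₀ c : ℂ} {R σ : ℝ} (hR : 0 < R) (hσ : 0 < σ)
    (hsub : closedBall x₀ R ×ˢ sphere c σ ⊆ O) (k : ℝ → ℂ) (hk : Continuous k) :
    HasDerivAt (fun x => ∫ t in (0:ℝ)..2 * π, k t • g (x, circleMap c σ t))
      (∫ t in (0:ℝ)..2 * π, k t • fderiv ℂ g (x₀, circleMap c σ t) (1, 0)) x₀ := by
  have hmem : ∀ x ∈ closedBall x₀ R, ∀ t : ℝ, (x, circleMap c σ t) ∈ O := fun x hx t =>
    hsub ⟨hx, circleMap_mem_sphere c hσ.le t⟩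
  have hx₀R : x₀ ∈ closedBall x₀ R := mem_closedBall_self hR.le
  have hdiff : ∀ x ∈ closedBall x₀ R, ∀ t : ℝ,
      HasFDerivAt g (fderiv ℂ g (x, circleMap c σ t)) (x, circleMap c σ t) := fun x hx t =>
    (hg.differentiableAt (hO.mem_nhds (hmem x hx t))).hasFDerivAt
  have hpart : ∀ x ∈ closedBall x₀ R, ∀ t : ℝ,
      HasDerivAt (fun y => g (y, circleMap c σ t))
        (fderiv ℂ g (x, circleMap c σ t) (1, 0)) x := fun x hx t =>
    (hdiff x hx t).comp_hasDerivAt x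
      ((hasDerivAt_id x).prodMk (hasDerivAt_const x (circleMap c σ t)))
  -- bound on g on the compact product set
  have hKc : IsCompact (closedBall x₀ R ×ˢ sphere c σ) :=
    (isCompact_closedBall _ _).prod (isCompact_sphere _ _)
  obtain ⟨M, hM⟩ := hKc.exists_bound_of_continuousOn (hg.continuousOn.mono hsub)
  -- Cauchy estimate for the partial derivative
  have hDbound : ∀ x ∈ closedBall x₀ (R / 2), ∀ t : ℝ,
      ‖fderiv ℂ g (x, circleMap c σ t) (1, 0)‖ ≤ M / (R / 2) := by
    intro x hx t
    have hxR : x ∈ closedBall x₀ R :=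
      closedBall_subset_closedBall (by linarith) hx
    have hsub2 : closedBall x (R / 2) ⊆ closedBall x₀ R := by
      intro z hz
      rw [mem_closedBall] at *
      have h3 := dist_triangle z x x₀
      linarith
    have hd1 : DiffContOnCl ℂ (fun y => g (y, circleMap c σ t)) (ball x (R / 2)) := by
      apply DifferentiableOn.diffContOnCl
      intro z hz
      have hz' : z ∈ closedBall x₀ R := hsub2 (closure_ball_subset_closedBall hz)
      exact ((hg.differentiableAt (hO.mem_nhds (hmem z hz' t))).comp z
        ((differentiableAt_id).prodMk (differentiableAt_const _))).differentiableWithinAt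
    have hC : ∀ z ∈ sphere x (R / 2), ‖g (z, circleMap c σ t)‖ ≤ M := fun z hz =>
      hM _ ⟨hsub2 (sphere_subset_closedBall hz), circleMap_mem_sphere c hσ.le t⟩
    have hest := Complex.norm_deriv_le_of_forall_mem_sphere_norm_le (by linarith : (0:ℝ) < R / 2) hd1 hC
    rwa [(hpart x hxR t).deriv] at hest
  -- bound on the kernel
  obtain ⟨Ck, hCk⟩ := (isCompact_uIcc (a := (0:ℝ)) (b := 2 * π)).exists_bound_of_continuousOn
    hk.continuousOn
  -- apply dominated differentiation under the integral sign
  have main := intervalIntegral.hasDerivAt_integral_of_dominated_loc_of_deriv_le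
    (𝕜 := ℂ) (μ := volume) (a := 0) (b := 2 * π)
    (F := fun x t => k t • g (x, circleMap c σ t))
    (F' := fun x t => k t • fderiv ℂ g (x, circleMap c σ t) (1, 0))
    (x₀ := x₀) (bound := fun _ => Ck * (M / (R / 2)))
    (ball_mem_nhds x₀ (half_pos hR)) ?_ ?_ ?_ ?_ ?_ ?_
  · exact main.2
  · filter_upwards [closedBall_mem_nhds x₀ hR] with x hx
    exact (hk.smul (hg.continuousOn.comp_continuous
      (continuous_const.prodMk (continuous_circleMap c σ)) (hmem x hx))).aestronglyMeasurable
  · exact (hk.smul (hg.continuousOn.comp_continuous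
      (continuous_const.prodMk (continuous_circleMap c σ))
      (hmem x₀ hx₀R))).intervalIntegrable 0 (2 * π)
  · have h1 : Measurable fun t : ℝ => fderiv ℂ g (x₀, circleMap c σ t) ((1:ℂ), (0:ℂ)) := by
      have h2 := measurable_fderiv_apply_const ℂ g ((1:ℂ), (0:ℂ))
      exact h2.comp (continuous_const.prodMk (continuous_circleMap c σ)).measurable
    exact ((hk.measurable).smul h1).aestronglyMeasurable
  · refine Filter.Eventually.of_forall fun t => fun ht x hx => ?_
    rw [norm_smul]
    have hk1 : ‖k t‖ ≤ Ck := hCk t (Set.uIoc_subset_uIcc ht)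
    have hk2 : ‖fderiv ℂ g (x, circleMap c σ t) (1, 0)‖ ≤ M / (R / 2) :=
      hDbound x (ball_subset_closedBall hx) t
    have h0 : (0:ℝ) ≤ ‖fderiv ℂ g (x, circleMap c σ t) (1, 0)‖ := norm_nonneg _
    have h0' : (0:ℝ) ≤ Ck := le_trans (norm_nonneg _) (hCk 0 left_mem_uIcc)
    exact mul_le_mul hk1 hk2 h0 h0'
  · exact intervalIntegrable_const
  · refine Filter.Eventually.of_forall fun t => fun ht x hx => ?_
    exact (hpart x (closedBall_subset_closedBall (by linarith)
      (ball_subset_closedBall hx)) t).const_smul (k t)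

lemma fourier_lemma {u : ℂ → ℂ} {r T : ℝ} (hr : 0 < r) (hT : 0 < T)
    (hu : ∀ b ∈ closedBall (0:ℂ) r, DifferentiableAt ℂ u b) :
    deriv u 0 = (1 / ((T:ℂ) * (r:ℂ))) * ∫ t in (0:ℝ)..T,
      Complex.exp (-(((2 * π * t / T : ℝ) : ℂ) * Complex.I)) *
        u ((r:ℂ) * Complex.exp (((2 * π * t / T : ℝ) : ℂ) * Complex.I)) := by
  set f : ℝ → ℂ := fun θ =>
    Complex.exp (-((θ:ℂ) * Complex.I)) * u ((r:ℂ) * Complex.exp ((θ:ℂ) * Complex.I)) with hf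
  have hrne : ((r:ℂ)) ≠ 0 := by exact_mod_cast hr.ne'
  have hTne : ((T:ℂ)) ≠ 0 := by exact_mod_cast hT.ne'
  have hπne : ((π:ℝ):ℂ) ≠ 0 := Complex.ofReal_ne_zero.mpr Real.pi_ne_zero
  -- Cauchy formula
  have hd : DiffContOnCl ℂ u (ball (0:ℂ) r) :=
    DifferentiableOn.diffContOnCl fun b hb =>
      (hu b (closure_ball_subset_closedBall hb)).differentiableWithinAt
  have h1 := HoloEP.deriv_eq_smul_circleIntegral_old hr hd
  rw [circleInt_eq] at h1
  -- simplify the circle integrand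
  have hsimp : ∀ t : ℝ,
      (deriv (circleMap 0 r) t * (circleMap 0 r t - 0) ^ (-2 : ℤ)) • u (circleMap 0 r t)
        = (Complex.I * (r:ℂ)⁻¹) • f t := by
    intro t
    have hz : circleMap 0 r t = (r:ℂ) * Complex.exp ((t:ℂ) * Complex.I) := by
      simp [circleMap]
    have hzne : circleMap 0 r t ≠ 0 := circleMap_ne_center hr.ne'
    have hco : circleMap 0 r t * Complex.I * (circleMap 0 r t) ^ (-2 : ℤ)
        = Complex.I * (r:ℂ)⁻¹ * Complex.exp (-((t:ℂ) * Complex.I)) := by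
      have h2 : circleMap 0 r t * Complex.I * (circleMap 0 r t) ^ (-2 : ℤ)
          = Complex.I * (circleMap 0 r t)⁻¹ := by
        rw [zpow_neg, zpow_two, mul_inv]
        field_simp
      rw [h2, hz, mul_inv, Complex.exp_neg, mul_assoc]
    rw [deriv_circleMap, sub_zero, hco, smul_eq_mul, smul_eq_mul, hf]
    simp only [hz]
    ring
  rw [intervalIntegral.integral_congr (g := fun t => (Complex.I * (r:ℂ)⁻¹) • f t)
    (fun t _ => hsimp t), intervalIntegral.integral_smul] at h1
  -- change of variables in the target integral
  have hc0 : (2 * π / T) ≠ 0 := by positivity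
  have hRW : (∫ t in (0:ℝ)..T,
      Complex.exp (-(((2 * π * t / T : ℝ) : ℂ) * Complex.I)) *
        u ((r:ℂ) * Complex.exp (((2 * π * t / T : ℝ) : ℂ) * Complex.I)))
      = ∫ t in (0:ℝ)..T, f (2 * π / T * t) := by
    refine intervalIntegral.integral_congr fun t _ => ?_
    simp only [hf]
    rw [show (2 * π * t / T : ℝ) = 2 * π / T * t from by ring]
  rw [hRW, intervalIntegral.integral_comp_mul_left f hc0]
  rw [mul_zero, show (2 * π / T * T : ℝ) = 2 * π by field_simp]
  -- final arithmetic
  rw [h1]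
  rw [smul_smul, smul_eq_mul, Complex.real_smul]
  push_cast
  field_simp
lemma scalar_core {m n : ℕ} (E ℓ : (Fin m → ℂ) × (Fin n → ℂ) → ℂ)
    (hE : Differentiable ℂ E) (hℓ : Differentiable ℂ ℓ)
    {W : Set ((Fin m → ℂ) × ℂ)} (hW : IsOpen W)
    {s : (Fin m → ℂ) × ℂ → Fin n → ℂ} (hs : DifferentiableOn ℂ s W)
    (hfix : ∀ p ∈ W, fderiv ℂ (fun x => E (p.1, x) + p.2 • ℓ (p.1, x)) (s p) = 0)
    (θ₀ : Fin m → ℂ) {r : ℝ} (hr : 0 < r)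
    (hmemW : ∀ b : ℂ, ‖b‖ ≤ r → ((θ₀, b) : (Fin m → ℂ) × ℂ) ∈ W) (v : Fin m → ℂ) :
    (∀ b₀ ∈ closedBall (0:ℂ) r, DifferentiableAt ℂ (fun b : ℂ =>
        fderiv ℂ (fun θ' => E (θ', s (θ₀, b)) + b • ℓ (θ', s (θ₀, b))) θ₀ v) b₀)
    ∧ fderiv ℂ (fun θ => ℓ (θ, s (θ, 0))) θ₀ v
      = deriv (fun b : ℂ =>
          fderiv ℂ (fun θ' => E (θ', s (θ₀, b)) + b • ℓ (θ', s (θ₀, b))) θ₀ v) 0 := by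
  classical
  set u : ℂ → ℂ := fun b =>
    fderiv ℂ (fun θ' => E (θ', s (θ₀, b)) + b • ℓ (θ', s (θ₀, b))) θ₀ v with hu
  set Φ : ((Fin m → ℂ) × ℂ) → ((Fin m → ℂ) × ℂ) →L[ℂ] ℂ := fun p =>
    (fderiv ℂ (fun q : ((Fin m → ℂ) × ℂ) × (Fin n → ℂ) =>
        E (q.1.1, q.2) + q.1.2 • ℓ (q.1.1, q.2)) (p, s p)).comp
      (ContinuousLinearMap.inl ℂ ((Fin m → ℂ) × ℂ) (Fin n → ℂ)) with hΦ
  -- uniform radius via compactness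
  have hιcont : Continuous (fun q : ℂ × ℂ => ((θ₀ + q.1 • v, q.2) : (Fin m → ℂ) × ℂ)) :=
    (continuous_const.add (continuous_fst.smul continuous_const)).prodMk continuous_snd
  have hOopen : IsOpen ((fun q : ℂ × ℂ => ((θ₀ + q.1 • v, q.2) : (Fin m → ℂ) × ℂ)) ⁻¹' W) :=
    hW.preimage hιcont
  have hK0 : (({(0:ℂ)} : Set ℂ) ×ˢ closedBall (0:ℂ) r)
      ⊆ ((fun q : ℂ × ℂ => ((θ₀ + q.1 • v, q.2) : (Fin m → ℂ) × ℂ)) ⁻¹' W) := by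
    rintro ⟨z, b⟩ ⟨hz, hb⟩
    simp only [mem_singleton_iff] at hz
    subst hz
    show ((θ₀ + (0:ℂ) • v, b) : (Fin m → ℂ) × ℂ) ∈ W
    rw [zero_smul, add_zero]
    exact hmemW b (by simpa [mem_closedBall, dist_zero_right] using hb)
  obtain ⟨ε, hε, hthick⟩ := (isCompact_singleton.prod (isCompact_closedBall (0:ℂ) r)
    ).exists_cthickening_subset_open hOopen hK0
  have hWmem' : ∀ z b : ℂ, ‖z‖ ≤ ε → ‖b‖ ≤ r + ε →
      ((θ₀ + z • v, b) : (Fin m → ℂ) × ℂ) ∈ W := fun z b hz hb =>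
    hthick (mem_of_thick hr hε hz hb)
  -- total derivative of F on W
  have hFtotal : ∀ p ∈ W,
      HasFDerivAt (fun q : (Fin m → ℂ) × ℂ => E (q.1, s q) + q.2 • ℓ (q.1, s q)) (Φ p) p :=
    fun p hp => hasFDerivAt_total E ℓ hE hℓ hW hs hfix hp
  -- u in terms of Φ
  have hu_eq : ∀ b : ℂ, u b = Φ (θ₀, b) ((v, 0)) := by
    intro b
    rw [hu]
    simp only []
    rw [(G_deriv_theta E ℓ hE hℓ θ₀ b (s (θ₀, b))).fderiv]
    simp [hΦ]
  -- affine curve in the z-direction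
  have hcurve1 : ∀ (z₀ b : ℂ),
      HasDerivAt (fun z : ℂ => ((θ₀ + z • v, b) : (Fin m → ℂ) × ℂ)) ((v, 0)) z₀ := by
    intro z₀ b
    have h1 : HasDerivAt (fun z : ℂ => θ₀ + z • v) v z₀ := by
      simpa using ((hasDerivAt_id z₀).smul_const v).const_add θ₀
    exact h1.prodMk (hasDerivAt_const z₀ b)
  -- the two-variable slice g (first coordinate: nudging parameter; second: z)
  set g : ℂ × ℂ → ℂ := fun q =>
    E (θ₀ + q.2 • v, s (θ₀ + q.2 • v, q.1)) + q.1 • ℓ (θ₀ + q.2 • v, s (θ₀ + q.2 • v, q.1))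
    with hgdef
  have hjcont : Continuous (fun q : ℂ × ℂ => ((θ₀ + q.2 • v, q.1) : (Fin m → ℂ) × ℂ)) :=
    (continuous_const.add (continuous_snd.smul continuous_const)).prodMk continuous_fst
  have hO'open : IsOpen ((fun q : ℂ × ℂ => ((θ₀ + q.2 • v, q.1) : (Fin m → ℂ) × ℂ)) ⁻¹' W) :=
    hW.preimage hjcont
  have hgdiff : DifferentiableOn ℂ g
      ((fun q : ℂ × ℂ => ((θ₀ + q.2 • v, q.1) : (Fin m → ℂ) × ℂ)) ⁻¹' W) := by
    intro q hq
    have hj : DifferentiableAt ℂ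
        (fun q : ℂ × ℂ => ((θ₀ + q.2 • v, q.1) : (Fin m → ℂ) × ℂ)) q :=
      ((differentiableAt_const _).fun_add (differentiableAt_snd.fun_smul
        (differentiableAt_const v))).prodMk differentiableAt_fst
    exact (((hFtotal _ hq).differentiableAt).comp q hj).differentiableWithinAt
  -- partial derivative of g in the z-direction
  have hgz : ∀ (z₀ b : ℂ), ((θ₀ + z₀ • v, b) : (Fin m → ℂ) × ℂ) ∈ W →
      HasDerivAt (fun z : ℂ => g (b, z)) (Φ (θ₀ + z₀ • v, b) ((v, 0))) z₀ :=
    fun z₀ b hp => (hFtotal _ hp).comp_hasDerivAt z₀ (hcurve1 z₀ b)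
  -- at z₀ = 0 the derivative is u b
  have hgz0 : ∀ b : ℂ, ‖b‖ ≤ r + ε → HasDerivAt (fun z : ℂ => g (b, z)) (u b) 0 := by
    intro b hb
    have h1 := hgz 0 b (hWmem' 0 b (by simp [hε.le]) hb)
    rw [show θ₀ + (0:ℂ) • v = θ₀ by simp] at h1
    rw [hu_eq b]
    exact h1
  -- the Cauchy kernel
  set k : ℝ → ℂ := fun t =>
    deriv (circleMap 0 ε) t * (circleMap 0 ε t - 0) ^ (-2 : ℤ) with hk
  have hkcont : Continuous k := by
    have hkalt : k = fun t =>
        circleMap 0 ε t * Complex.I * (circleMap 0 ε t - 0) ^ (-2 : ℤ) := by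
      funext t
      simp only [hk, deriv_circleMap]
    rw [hkalt]
    refine ((continuous_circleMap 0 ε).mul continuous_const).mul ?_
    refine Continuous.zpow₀ ((continuous_circleMap 0 ε).sub continuous_const) _ fun t =>
      Or.inl (sub_ne_zero.mpr (circleMap_ne_center hε.ne'))
  -- Cauchy integral representation of u
  have hrep : ∀ b : ℂ, ‖b‖ ≤ r + ε → u b
      = (2 * (π:ℂ) * Complex.I)⁻¹ •
          ∫ t in (0:ℝ)..2 * π, k t • g (b, circleMap 0 ε t) := by
    intro b hb
    have hdc : DiffContOnCl ℂ (fun z : ℂ => g (b, z)) (ball (0:ℂ) ε) := by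
      refine DifferentiableOn.diffContOnCl fun z hz => ?_
      have hz' : ‖z‖ ≤ ε := by
        have h3 := closure_ball_subset_closedBall hz
        simpa [mem_closedBall, dist_zero_right] using h3
      exact (hgz z b (hWmem' z b hz' hb)).differentiableAt.differentiableWithinAt
    have h1 := HoloEP.deriv_eq_smul_circleIntegral_old hε hdc
    rw [circleInt_eq] at h1
    rw [← (hgz0 b hb).deriv]
    simpa only [hk] using h1
  -- engine at each point of the closed ball
  have hsub' : ∀ b₀ : ℂ, ‖b₀‖ ≤ r → closedBall b₀ ε ×ˢ sphere (0:ℂ) ε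
      ⊆ ((fun q : ℂ × ℂ => ((θ₀ + q.2 • v, q.1) : (Fin m → ℂ) × ℂ)) ⁻¹' W) := by
    rintro b₀ hb₀ ⟨x, w⟩ ⟨hx, hw⟩
    have hx' : ‖x‖ ≤ r + ε := by
      have h2 : ‖x - b₀‖ ≤ ε := by
        rw [← dist_eq_norm]
        exact mem_closedBall.mp hx
      calc ‖x‖ ≤ ‖b₀‖ + ‖x - b₀‖ := norm_le_insert' x b₀
      _ ≤ r + ε := add_le_add hb₀ h2
    have hw' : ‖w‖ ≤ ε := by
      have h3 : dist w 0 = ε := mem_sphere.mp hw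
      rw [dist_zero_right] at h3
      exact h3.le
    exact mem_preimage.mpr (hWmem' w x hw' hx')
  have hengine : ∀ b₀ : ℂ, ‖b₀‖ ≤ r →
      HasDerivAt (fun x => ∫ t in (0:ℝ)..2 * π, k t • g (x, circleMap 0 ε t))
        (∫ t in (0:ℝ)..2 * π, k t • fderiv ℂ g (b₀, circleMap 0 ε t) (1, 0)) b₀ :=
    fun b₀ hb₀ => engine hO'open hgdiff hε hε (hsub' b₀ hb₀) k hkcont
  have hEv : ∀ b₀ : ℂ, ‖b₀‖ ≤ r → u =ᶠ[nhds b₀]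
      fun x => (2 * (π:ℂ) * Complex.I)⁻¹ •
        ∫ t in (0:ℝ)..2 * π, k t • g (x, circleMap 0 ε t) := by
    intro b₀ hb₀
    filter_upwards [Metric.ball_mem_nhds b₀ hε] with x hx
    refine hrep x ?_
    have h2 : ‖x - b₀‖ < ε := by
      rw [← dist_eq_norm]
      exact mem_ball.mp hx
    calc ‖x‖ ≤ ‖b₀‖ + ‖x - b₀‖ := norm_le_insert' x b₀
    _ ≤ r + ε := add_le_add hb₀ h2.le
  have hUdiff : ∀ b₀ : ℂ, ‖b₀‖ ≤ r → HasDerivAt u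
      ((2 * (π:ℂ) * Complex.I)⁻¹ •
        ∫ t in (0:ℝ)..2 * π, k t • fderiv ℂ g (b₀, circleMap 0 ε t) (1, 0)) b₀ :=
    fun b₀ hb₀ => ((hengine b₀ hb₀).const_smul
      ((2 * (π:ℂ) * Complex.I)⁻¹)).congr_of_eventuallyEq (hEv b₀ hb₀)
  constructor
  · intro b₀ hb₀
    have hb₀' : ‖b₀‖ ≤ r := by
      have := mem_closedBall.mp hb₀
      rwa [dist_zero_right] at this
    exact (hUdiff b₀ hb₀').differentiableAt
  -- identify the integrand of the engine formula at b₀ = 0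
  have hfd : ∀ t : ℝ, fderiv ℂ g ((0:ℂ), circleMap 0 ε t) ((1:ℂ), (0:ℂ))
      = ℓ (θ₀ + circleMap 0 ε t • v, s (θ₀ + circleMap 0 ε t • v, 0)) := by
    intro t
    have hwnorm : ‖circleMap 0 ε t‖ ≤ ε := by
      have h3 : dist (circleMap 0 ε t) 0 = ε := mem_sphere.mp (circleMap_mem_sphere (0:ℂ) hε.le t)
      rw [dist_zero_right] at h3
      exact h3.le
    have hp' : ((θ₀ + circleMap 0 ε t • v, (0:ℂ)) : (Fin m → ℂ) × ℂ) ∈ W :=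
      hWmem' _ 0 hwnorm (by simpa using (by positivity : (0:ℝ) ≤ r + ε))
    have hq : ((0:ℂ), circleMap 0 ε t)
        ∈ ((fun q : ℂ × ℂ => ((θ₀ + q.2 • v, q.1) : (Fin m → ℂ) × ℂ)) ⁻¹' W) :=
      mem_preimage.mpr hp'
    have hA : HasDerivAt (fun x : ℂ => g (x, circleMap 0 ε t))
        (fderiv ℂ g ((0:ℂ), circleMap 0 ε t) ((1:ℂ), (0:ℂ))) 0 :=
      by have h := ((hgdiff.differentiableAt (hO'open.mem_nhds hq)).hasFDerivAt).comp_hasDerivAt (0:ℂ)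
          ((hasDerivAt_id (0:ℂ)).prodMk (hasDerivAt_const (0:ℂ) (circleMap 0 ε t))); exact h
    have hB : HasDerivAt (fun x : ℂ => g (x, circleMap 0 ε t))
        (Φ (θ₀ + circleMap 0 ε t • v, (0:ℂ)) (((0 : Fin m → ℂ), (1:ℂ)))) 0 :=
      (hFtotal _ hp').comp_hasDerivAt 0
        ((hasDerivAt_const 0 _).prodMk (hasDerivAt_id 0))
    have hval : Φ (θ₀ + circleMap 0 ε t • v, (0:ℂ)) (((0 : Fin m → ℂ), (1:ℂ)))
        = ℓ (θ₀ + circleMap 0 ε t • v, s (θ₀ + circleMap 0 ε t • v, 0)) := by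
      rw [hΦ]
      simp only [ContinuousLinearMap.comp_apply, ContinuousLinearMap.inl_apply]
      exact G_deriv_beta E ℓ hE hℓ _ 0 _
    rw [← hval]
    exact hA.unique hB
  -- the boundary function ψ and its Cauchy representation
  have hψdiff : ∀ z : ℂ, ‖z‖ ≤ ε → DifferentiableAt ℂ
      (fun z : ℂ => ℓ (θ₀ + z • v, s (θ₀ + z • v, 0))) z := by
    intro z hz
    have haff : DifferentiableAt ℂ (fun z : ℂ => θ₀ + z • v) z :=
      (differentiableAt_id.fun_smul (differentiableAt_const v)).const_add θ₀
    have hsz : DifferentiableAt ℂ (fun z : ℂ => s (θ₀ + z • v, 0)) z := by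
      have hmem := hWmem' z 0 hz (by simpa using (by positivity : (0:ℝ) ≤ r + ε))
      exact (hs.differentiableAt (hW.mem_nhds hmem)).comp z
        (haff.prodMk (differentiableAt_const 0))
    exact (hℓ _).comp z (haff.prodMk hsz)
  have hψc : DiffContOnCl ℂ (fun z : ℂ => ℓ (θ₀ + z • v, s (θ₀ + z • v, 0)))
      (ball (0:ℂ) ε) := by
    refine DifferentiableOn.diffContOnCl fun z hz => ?_
    have hz' : ‖z‖ ≤ ε := by
      have h3 := closure_ball_subset_closedBall hz
      simpa [mem_closedBall, dist_zero_right] using h3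
    exact (hψdiff z hz').differentiableWithinAt
  have h2 := HoloEP.deriv_eq_smul_circleIntegral_old hε hψc
  rw [circleInt_eq] at h2
  have h0r : ‖(0:ℂ)‖ ≤ r := by simp [hr.le]
  have hderivu : deriv u 0 = (2 * (π:ℂ) * Complex.I)⁻¹ •
      ∫ t in (0:ℝ)..2 * π, k t • fderiv ℂ g ((0:ℂ), circleMap 0 ε t) (1, 0) :=
    (hUdiff 0 h0r).deriv
  have hintcongr : (∫ t in (0:ℝ)..2 * π, k t • fderiv ℂ g ((0:ℂ), circleMap 0 ε t) (1, 0))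
      = ∫ t in (0:ℝ)..2 * π,
          (deriv (circleMap 0 ε) t * (circleMap 0 ε t - 0) ^ (-2 : ℤ)) •
            ℓ (θ₀ + circleMap 0 ε t • v, s (θ₀ + circleMap 0 ε t • v, 0)) := by
    refine intervalIntegral.integral_congr fun t _ => ?_
    simp only [hk]
    rw [hfd t]
  -- chain rule for the loss along the direction v
  have hmem0 : ((θ₀, (0:ℂ)) : (Fin m → ℂ) × ℂ) ∈ W := hmemW 0 (by simp [hr.le])
  have hL1 : DifferentiableAt ℂ (fun θ => ℓ (θ, s (θ, 0))) θ₀ := by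
    have hsθ : DifferentiableAt ℂ (fun θ : Fin m → ℂ => s (θ, 0)) θ₀ :=
      (hs.differentiableAt (hW.mem_nhds hmem0)).comp θ₀
        (differentiableAt_id.prodMk (differentiableAt_const 0))
    exact (hℓ _).comp θ₀ (differentiableAt_id.prodMk hsθ)
  have hcv : HasDerivAt (fun z : ℂ => θ₀ + z • v) v 0 := by
    simpa using ((hasDerivAt_id (0:ℂ)).smul_const v).const_add θ₀
  have hl' : HasFDerivAt (fun θ => ℓ (θ, s (θ, 0)))
      (fderiv ℂ (fun θ => ℓ (θ, s (θ, 0))) θ₀) (θ₀ + (0:ℂ) • v) := by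
    rw [show θ₀ + (0:ℂ) • v = θ₀ by simp]
    exact hL1.hasFDerivAt
  have hchain : HasDerivAt (fun z : ℂ => ℓ (θ₀ + z • v, s (θ₀ + z • v, 0)))
      (fderiv ℂ (fun θ => ℓ (θ, s (θ, 0))) θ₀ v) 0 := by have h := hl'.comp_hasDerivAt (0:ℂ) hcv; exact h
  rw [← hchain.deriv, h2, hderivu, hintcongr]


end HoloEP

open Metric HoloEP

/-- Theorem 1 (exact gradient from finite teaching signals): the exact loss gradient
equals the first exponential Fourier coefficient, over one period `T`, of the
θ-partial derivative of the total energy evaluated along the adiabatic fixed points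
traced as the complex nudging parameter moves on the circle of radius `r`. -/
theorem exact_gradient_from_finite_teaching_signals
    {m n : ℕ}
    (E ℓ : (Fin m → ℂ) × (Fin n → ℂ) → ℂ)
    (hE : Differentiable ℂ E) (hℓ : Differentiable ℂ ℓ)
    (W : Set ((Fin m → ℂ) × ℂ)) (hW : IsOpen W)
    (s : (Fin m → ℂ) × ℂ → (Fin n → ℂ))
    (hs : DifferentiableOn ℂ s W)
    (hfix : ∀ p ∈ W,
      fderiv ℂ (fun x => E (p.1, x) + p.2 • ℓ (p.1, x)) (s p) = 0)
    (L : (Fin m → ℂ) → ℂ) (hL : L = fun θ => ℓ (θ, s (θ, 0)))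
    (θ₀ : Fin m → ℂ) (r T : ℝ) (hr : 0 < r) (hT : 0 < T)
    (hball : {θ₀} ×ˢ {β : ℂ | ‖β‖ ≤ r} ⊆ W)
    (β : ℝ → ℂ) (hβ : β = fun t => (r : ℂ) * Complex.exp ((2 * π * t / T : ℝ) * Complex.I)) :
    fderiv ℂ L θ₀
      = (1 / ((T : ℂ) * (r : ℂ))) •
        ∫ t in ((0 : ℝ))..T,
          Complex.exp (-((2 * π * t / T : ℝ) * Complex.I)) •
            fderiv ℂ (fun θ' => E (θ', s (θ₀, β t)) + (β t) • ℓ (θ', s (θ₀, β t))) θ₀ := by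
  have hmemW : ∀ b : ℂ, ‖b‖ ≤ r → ((θ₀, b) : (Fin m → ℂ) × ℂ) ∈ W := fun b hb =>
    hball (Set.mk_mem_prod rfl hb)
  have hcore := fun v => scalar_core E ℓ hE hℓ hW hs hfix θ₀ hr hmemW v
  simp only [hL, hβ]
  -- continuity facts
  have harg : Continuous fun t : ℝ => (((2 * π * t / T : ℝ) : ℂ) * Complex.I) := by
    refine Continuous.mul ?_ continuous_const
    exact Complex.continuous_ofReal.comp (by continuity)
  have hexpc' : Continuous fun t : ℝ =>
      Complex.exp (-(((2 * π * t / T : ℝ) : ℂ) * Complex.I)) :=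
    Complex.continuous_exp.comp harg.neg
  have hβc : Continuous fun t : ℝ =>
      (r : ℂ) * Complex.exp (((2 * π * t / T : ℝ) : ℂ) * Complex.I) :=
    continuous_const.mul (Complex.continuous_exp.comp harg)
  have hβmem : ∀ t : ℝ,
      ((r : ℂ) * Complex.exp (((2 * π * t / T : ℝ) : ℂ) * Complex.I))
        ∈ closedBall (0 : ℂ) r := by
    intro t
    rw [mem_closedBall, dist_zero_right, norm_mul]
    have h1 : ‖Complex.exp (((2 * π * t / T : ℝ) : ℂ) * Complex.I)‖ = 1 := by
      rw [Complex.norm_exp_ofReal_mul_I]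
    rw [h1, mul_one, Complex.norm_real, Real.norm_eq_abs, abs_of_pos hr]
  have hucont : ∀ w : Fin m → ℂ, Continuous fun t : ℝ =>
      fderiv ℂ (fun θ' =>
        E (θ', s (θ₀, (r : ℂ) * Complex.exp (((2 * π * t / T : ℝ) : ℂ) * Complex.I)))
          + ((r : ℂ) * Complex.exp (((2 * π * t / T : ℝ) : ℂ) * Complex.I)) •
            ℓ (θ', s (θ₀, (r : ℂ) * Complex.exp (((2 * π * t / T : ℝ) : ℂ) * Complex.I)))) θ₀ w := by
    intro w
    have hcOn : ContinuousOn (fun b : ℂ =>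
        fderiv ℂ (fun θ' => E (θ', s (θ₀, b)) + b • ℓ (θ', s (θ₀, b))) θ₀ w)
        (closedBall (0 : ℂ) r) := fun b hb =>
      ((hcore w).1 b hb).continuousAt.continuousWithinAt
    exact hcOn.comp_continuous hβc hβmem
  have hAcont : Continuous fun t : ℝ =>
      fderiv ℂ (fun θ' =>
        E (θ', s (θ₀, (r : ℂ) * Complex.exp (((2 * π * t / T : ℝ) : ℂ) * Complex.I)))
          + ((r : ℂ) * Complex.exp (((2 * π * t / T : ℝ) : ℂ) * Complex.I)) •
            ℓ (θ', s (θ₀, (r : ℂ) * Complex.exp (((2 * π * t / T : ℝ) : ℂ) * Complex.I)))) θ₀ := by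
    have hrepr : (fun t : ℝ =>
        fderiv ℂ (fun θ' =>
          E (θ', s (θ₀, (r : ℂ) * Complex.exp (((2 * π * t / T : ℝ) : ℂ) * Complex.I)))
            + ((r : ℂ) * Complex.exp (((2 * π * t / T : ℝ) : ℂ) * Complex.I)) •
              ℓ (θ', s (θ₀, (r : ℂ) * Complex.exp (((2 * π * t / T : ℝ) : ℂ) * Complex.I)))) θ₀)
        = fun t => ∑ i, (fderiv ℂ (fun θ' =>
            E (θ', s (θ₀, (r : ℂ) * Complex.exp (((2 * π * t / T : ℝ) : ℂ) * Complex.I)))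
              + ((r : ℂ) * Complex.exp (((2 * π * t / T : ℝ) : ℂ) * Complex.I)) •
                ℓ (θ', s (θ₀, (r : ℂ) * Complex.exp (((2 * π * t / T : ℝ) : ℂ) * Complex.I)))) θ₀
              (Pi.single i (1:ℂ)))
            • (ContinuousLinearMap.proj i : ((Fin m → ℂ)) →L[ℂ] ℂ) := by
      funext t
      exact clm_eq_sum_proj _
    rw [hrepr]
    exact continuous_finset_sum _ fun i _ =>
      (hucont (Pi.single i (1:ℂ))).smul continuous_const
  have hInt : IntervalIntegrable (fun t : ℝ =>
      Complex.exp (-(((2 * π * t / T : ℝ) : ℂ) * Complex.I)) •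
        fderiv ℂ (fun θ' =>
          E (θ', s (θ₀, (r : ℂ) * Complex.exp (((2 * π * t / T : ℝ) : ℂ) * Complex.I)))
            + ((r : ℂ) * Complex.exp (((2 * π * t / T : ℝ) : ℂ) * Complex.I)) •
              ℓ (θ', s (θ₀, (r : ℂ) * Complex.exp (((2 * π * t / T : ℝ) : ℂ) * Complex.I)))) θ₀)
      MeasureTheory.volume 0 T :=
    (hexpc'.smul hAcont).intervalIntegrable 0 T
  refine ContinuousLinearMap.ext fun v => ?_
  rw [ContinuousLinearMap.smul_apply, ContinuousLinearMap.intervalIntegral_apply hInt v]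
  rw [(hcore v).2, fourier_lemma hr hT (hcore v).1]
  rw [smul_eq_mul]
  congr 1
end

section
/- Let r > 0, let f : ℂ → ℂ be complex-differentiable on an open set U ⊆ ℂ containing the closed disk {z : ℂ | ‖z‖ ≤ r}, and let N ≥ 2 be a natural number. Define β_k = r·exp(2πi k / N) for k = 0, …, N−1 and the estimator ∇̂(N) = (1/(N·r)) · Σ_{k=0}^{N−1} f(β_k)·exp(−2πi k / N). Then ∇̂(N) − deriv f 0 = Σ_{q=1}^{∞} (iteratedDeriv (N·q + 1) f 0) · r^{N·q} / (N·q + 1)!, where the series on the right converges. -/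
open scoped Real

/-- Exact bias formula (Eq. (9)) for the `N`-point Riemann-sum estimator of the
holomorphic-EP gradient: the bias is the sub-sum of the Taylor remainder over the
orders `p = N·q`, `q ≥ 1`. -/
theorem bias_of_N_point_estimator
    (r : ℝ) (hr : 0 < r)
    (f : ℂ → ℂ) (U : Set ℂ) (hU : IsOpen U)
    (hdisk : {z : ℂ | ‖z‖ ≤ r} ⊆ U)
    (hf : DifferentiableOn ℂ f U)
    (N : ℕ) (hN : 2 ≤ N) :
    HasSum
      (fun q : ℕ =>
        iteratedDeriv (N * (q + 1) + 1) f 0 * (r : ℂ) ^ (N * (q + 1)) /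
          (Nat.factorial (N * (q + 1) + 1) : ℂ))
      ((1 / ((N : ℂ) * (r : ℂ))) *
          (∑ k ∈ Finset.range N,
            f ((r : ℂ) * Complex.exp ((2 * π * k / N : ℝ) * Complex.I)) *
              Complex.exp (-((2 * π * k / N : ℝ) * Complex.I)))
        - deriv f 0) := by
  classical
  -- get a slightly larger closed ball inside U
  obtain ⟨ε, hε, hthick⟩ := (isCompact_closedBall (0:ℂ) r).exists_thickening_subset_open hU
    (by simpa [Metric.closedBall, Metric.mem_closedBall, dist_zero_right] using hdisk)
  have hRpos : (0:ℝ) < r + ε/2 := by linarith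
  set R : NNReal := ⟨r + ε/2, hRpos.le⟩ with hRdef
  have hsub : Metric.closedBall (0:ℂ) R ⊆ U := by
    refine subset_trans ?_ hthick
    rw [thickening_closedBall hε hr.le]
    intro z hz
    simp only [Metric.mem_closedBall, dist_zero_right] at hz
    simp only [Metric.mem_ball, dist_zero_right]
    have : (R : ℝ) = r + ε/2 := rfl
    rw [this] at hz; linarith
  have hball : HasFPowerSeriesOnBall f (cauchyPowerSeries f 0 R) 0 R :=
    (hf.mono hsub).hasFPowerSeriesOnBall (by exact_mod_cast hRpos)
  set ps := cauchyPowerSeries f 0 R with hps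
  set c : ℕ → ℂ := fun p => ps.coeff p with hc
  -- membership of points of norm ≤ r
  have hmem : ∀ z : ℂ, ‖z‖ ≤ r → z ∈ EMetric.ball (0:ℂ) R := by
    intro z hz
    change edist z 0 < _; rw [edist_zero_right]
    have h1 : ‖z‖₊ < R := by
      rw [← NNReal.coe_lt_coe]
      simp only [coe_nnnorm]
      have : (R : ℝ) = r + ε/2 := rfl
      rw [this]; linarith
    exact_mod_cast ENNReal.coe_lt_coe.mpr h1
  
  have hN0 : (0:ℕ) < N := by omega
  have hNC : (N:ℂ) ≠ 0 := Nat.cast_ne_zero.mpr (by omega)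
  have hrC : (r:ℂ) ≠ 0 := by exact_mod_cast hr.ne'
  have hπ : (π:ℂ) ≠ 0 := by exact_mod_cast Real.pi_ne_zero
  set θ : ℕ → ℂ := fun k => ((2 * π * k / N : ℝ) : ℂ) * Complex.I with hθ
  -- power series summation at points of norm ≤ r
  have hsum_z : ∀ z : ℂ, ‖z‖ ≤ r → HasSum (fun p => c p * z ^ p) (f z) := by
    intro z hz
    have h := hball.hasSum (hmem z hz)
    simp only [zero_add] at h
    have heq : (fun p => ps p fun _ => z) = fun p => c p * z ^ p := by
      funext p
      rw [ps.apply_eq_pow_smul_coeff, smul_eq_mul]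
      ring
    rwa [heq] at h
  have hnorm : ∀ k : ℕ, ‖(r:ℂ) * Complex.exp (θ k)‖ ≤ r := by
    intro k
    rw [norm_mul, hθ]
    simp only []
    rw [Complex.norm_exp_ofReal_mul_I]
    simp [abs_of_pos hr]
  -- sum over k of the series
  have h2 : HasSum
      (fun p => ∑ k ∈ Finset.range N,
        Complex.exp (-θ k) * (c p * ((r:ℂ) * Complex.exp (θ k)) ^ p))
      (∑ k ∈ Finset.range N, Complex.exp (-θ k) * f ((r:ℂ) * Complex.exp (θ k))) := by
    refine hasSum_sum fun k _ => ?_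
    exact (hsum_z _ (hnorm k)).mul_left _
  -- evaluate the inner finite sums using roots of unity
  have key : ∀ p : ℕ,
      (∑ k ∈ Finset.range N,
        Complex.exp (-θ k) * (c p * ((r:ℂ) * Complex.exp (θ k)) ^ p))
      = c p * (r:ℂ) ^ p * (if (N:ℤ) ∣ (p:ℤ) - 1 then (N:ℂ) else 0) := by
    intro p
    set ζ : ℂ := Complex.exp ((((p:ℂ) - 1) * (2 * (π:ℂ) / N)) * Complex.I) with hζ
    have hterm : ∀ k ∈ Finset.range N,
        Complex.exp (-θ k) * (c p * ((r:ℂ) * Complex.exp (θ k)) ^ p)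
        = c p * (r:ℂ) ^ p * ζ ^ k := by
      intro k _
      have e1 : ((r:ℂ) * Complex.exp (θ k)) ^ p
          = (r:ℂ) ^ p * Complex.exp ((p:ℂ) * θ k) := by
        rw [mul_pow, Complex.exp_nat_mul]
      have e2 : Complex.exp (-θ k) * Complex.exp ((p:ℂ) * θ k) = ζ ^ k := by
        rw [← Complex.exp_add, hζ, ← Complex.exp_nat_mul]
        congr 1
        simp only [hθ]
        push_cast
        field_simp
        ring
      rw [e1, ← e2]
      ring
    rw [Finset.sum_congr rfl hterm, ← Finset.mul_sum]
    congr 1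
    have hζN : ζ ^ N = 1 := by
      rw [hζ, ← Complex.exp_nat_mul]
      have harg : (N:ℂ) * ((((p:ℂ) - 1) * (2 * (π:ℂ) / N)) * Complex.I)
          = (((p:ℤ) - 1 : ℤ) : ℂ) * (2 * π * Complex.I) := by
        push_cast
        field_simp
      rw [harg, Complex.exp_int_mul_two_pi_mul_I]
    by_cases hdvd : (N:ℤ) ∣ (p:ℤ) - 1
    · obtain ⟨m, hm⟩ := hdvd
      have hp : ((p:ℂ) - 1) = (N:ℂ) * m := by exact_mod_cast hm
      have hζ1 : ζ = 1 := by
        rw [hζ]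
        have harg : (((p:ℂ) - 1) * (2 * (π:ℂ) / N)) * Complex.I
            = (m:ℤ) * (2 * π * Complex.I) := by
          rw [hp]
          push_cast
          field_simp
        rw [harg, Complex.exp_int_mul_two_pi_mul_I]
      rw [if_pos ⟨m, hm⟩]
      simp [hζ1]
    · have hζne : ζ ≠ 1 := by
        intro h1
        apply hdvd
        rw [hζ, Complex.exp_eq_one_iff] at h1
        obtain ⟨n, hn⟩ := h1
        refine ⟨n, ?_⟩
        have h3 : ((p:ℂ) - 1) * (2 * π * Complex.I)
            = ((N:ℂ) * n) * (2 * π * Complex.I) := by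
          field_simp at hn
          linear_combination (2 * π * Complex.I) * hn
        have h4 : ((p:ℂ) - 1) = (N:ℂ) * n :=
          mul_right_cancel₀ (by simp [Complex.I_ne_zero, hπ]) h3
        exact_mod_cast h4
      rw [if_neg hdvd, geom_sum_eq hζne, hζN]
      simp
  -- the master HasSum in terms of the divisibility indicator
  have h3 : HasSum
      (fun p => c p * (r:ℂ) ^ p * (if (N:ℤ) ∣ (p:ℤ) - 1 then (N:ℂ) else 0))
      (∑ k ∈ Finset.range N, Complex.exp (-θ k) * f ((r:ℂ) * Complex.exp (θ k))) := by
    rwa [show (fun p => c p * (r:ℂ) ^ p * (if (N:ℤ) ∣ (p:ℤ) - 1 then (N:ℂ) else 0))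
      = (fun p => ∑ k ∈ Finset.range N,
          Complex.exp (-θ k) * (c p * ((r:ℂ) * Complex.exp (θ k)) ^ p)) from
      funext fun p => (key p).symm]
  have h4 := h3.mul_left (1 / ((N:ℂ) * r))
  set G : ℕ → ℂ := fun p =>
    (1 / ((N:ℂ) * r)) * (c p * (r:ℂ) ^ p * (if (N:ℤ) ∣ (p:ℤ) - 1 then (N:ℂ) else 0))
    with hG
  -- restrict to indices p = N*q + 1
  have hinj : Function.Injective (fun q : ℕ => N * q + 1) := by
    intro a b hab
    simp only [add_left_inj] at hab
    exact Nat.eq_of_mul_eq_mul_left hN0 hab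
  have hvanish : ∀ p ∉ Set.range (fun q : ℕ => N * q + 1), G p = 0 := by
    intro p hp
    rw [hG]
    simp only []
    rw [if_neg, mul_zero, mul_zero]
    rintro ⟨m, hm⟩
    rcases lt_or_ge m 0 with hm0 | hm0
    · have h5 : (N:ℤ) * m ≤ (N:ℤ) * (-1) :=
        mul_le_mul_of_nonneg_left (by omega) (by positivity)
      have h6 : (0:ℤ) ≤ (p:ℤ) := Int.natCast_nonneg p
      have h7 : (2:ℤ) ≤ (N:ℤ) := by exact_mod_cast hN
      linarith
    · lift m to ℕ using hm0
      have h5 : (p:ℤ) = (N:ℤ) * (m:ℕ) + 1 := by linarith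
      have h6 : p = N * m + 1 := by exact_mod_cast h5
      exact hp ⟨m, h6.symm⟩
  have h5 : HasSum (fun q => G (N * q + 1))
      ((1 / ((N:ℂ) * r)) *
        ∑ k ∈ Finset.range N, Complex.exp (-θ k) * f ((r:ℂ) * Complex.exp (θ k))) :=
    (hinj.hasSum_iff hvanish).mpr h4
  have h6 := (hasSum_nat_add_iff' 1).mpr h5
  -- identify coefficients with iterated derivatives
  have hcoeff : ∀ n : ℕ, iteratedDeriv n f 0 = (n.factorial : ℂ) * c n := by
    intro n
    rw [iteratedDeriv_eq_iteratedFDeriv, ← hball.factorial_smul (1:ℂ) n, nsmul_eq_mul]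
    rfl
  have hderiv : deriv f 0 = c 1 := hball.hasFPowerSeriesAt.deriv
  -- simplify G at the relevant indices
  have hGval : ∀ j : ℕ, G (N * j + 1) = c (N * j + 1) * (r:ℂ) ^ (N * j) := by
    intro j
    rw [hG]
    simp only []
    rw [if_pos ⟨j, by push_cast; ring⟩, pow_succ]
    field_simp
  -- finish
  convert h6 using 1
  · rfl
  · funext q
    rw [hGval (q + 1), hcoeff (N * (q + 1) + 1)]
    have hfac : ((N * (q + 1) + 1).factorial : ℂ) ≠ 0 :=
      Nat.cast_ne_zero.mpr (Nat.factorial_ne_zero _)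
    field_simp
  · rw [Finset.sum_range_one]
    have hg0 : G (N * 0 + 1) = c 1 := by rw [hGval 0]; norm_num
    rw [hg0, hderiv]
    congr 2
    refine Finset.sum_congr rfl fun k _ => ?_
    rw [mul_comm]
end

section
/- Let r > 0, let f : ℂ → ℂ be complex-differentiable on an open set U ⊆ ℂ containing the closed disk {z : ℂ | ‖z‖ ≤ r}, and for each natural number N ≥ 2 define ∇̂(N) = (1/(N·r)) · Σ_{k=0}^{N−1} f(r·exp(2πi k / N))·exp(−2πi k / N). Then ∇̂(N) converges to deriv f 0 as N → ∞ (i.e. Tendsto (fun N => ∇̂(N)) atTop (nhds (deriv f 0))). -/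
open scoped Real ENNReal NNReal Topology

open Filter Complex Finset Metric Function

/-- The `N`-point Riemann-sum estimator of the holomorphic-EP gradient, sampling the
circular nudging path at the scaled `N`-th roots of unity, converges to the exact
derivative as `N → ∞`. -/
theorem N_point_estimator_tendsto_deriv
    (r : ℝ) (hr : 0 < r)
    (f : ℂ → ℂ) (U : Set ℂ) (hU : IsOpen U)
    (hdisk : {z : ℂ | ‖z‖ ≤ r} ⊆ U)
    (hf : DifferentiableOn ℂ f U) :
    Filter.Tendsto
      (fun N : ℕ =>
        (1 / ((N : ℂ) * (r : ℂ))) *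
          ∑ k ∈ Finset.range N,
            f ((r : ℂ) * Complex.exp ((2 * π * k / N : ℝ) * Complex.I)) *
              Complex.exp (-((2 * π * k / N : ℝ) * Complex.I)))
      Filter.atTop (nhds (deriv f 0)) := by
  -- Setup: a power series for `f` on a ball of radius strictly larger than `r`.
  have hdisk' : Metric.closedBall (0:ℂ) r ⊆ U := by
    intro z hz
    exact hdisk (by simpa [Metric.mem_closedBall, dist_zero_right] using hz)
  obtain ⟨δ, hδ, hth⟩ := (isCompact_closedBall (0:ℂ) r).exists_thickening_subset_open hU hdisk'
  have hball : Metric.ball (0:ℂ) (δ + r) ⊆ U := by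
    rw [← thickening_closedBall hδ hr.le]; exact hth
  set R : NNReal := ⟨δ/2 + r, by positivity⟩ with hR
  have hRpos : 0 < R := by
    rw [← NNReal.coe_lt_coe]; show (0:ℝ) < δ/2 + r; positivity
  have hfd : DifferentiableOn ℂ f (Metric.closedBall (0:ℂ) (R:ℝ)) := by
    refine hf.mono (subset_trans ?_ hball)
    refine (Metric.closedBall_subset_ball ?_)
    show δ/2 + r < δ + r
    linarith
  set p := cauchyPowerSeries f 0 R with hpdef
  have hp : HasFPowerSeriesOnBall f p 0 R := hfd.hasFPowerSeriesOnBall hRpos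
  have hrR : (r : ℝ) < (R:ℝ) := by show r < δ/2 + r; linarith
  have hrad : ((Real.toNNReal r : ℝ≥0) : ℝ≥0∞) < p.radius := by
    refine lt_of_lt_of_le ?_ hp.r_le
    rw [ENNReal.coe_lt_coe, ← NNReal.coe_lt_coe, Real.coe_toNNReal _ hr.le]
    exact hrR
  have hg : Summable (fun n => ‖p n‖ * r ^ n) := by
    have := p.summable_norm_mul_pow hrad
    simpa [Real.coe_toNNReal _ hr.le] using this
  have key : ∀ y : ℂ, ‖y‖ = r → HasSum (fun n => p.coeff n * y ^ n) (f y) := by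
    intro y hy
    have hy' : y ∈ Metric.eball (0:ℂ) R := by
      rw [Metric.emetric_ball_nnreal, Metric.mem_ball, dist_zero_right, hy]
      exact hrR
    have := hp.hasSum hy'
    simpa [FormalMultilinearSeries.apply_eq_pow_smul_coeff, smul_eq_mul, mul_comm] using this
  have hcoeff : ∀ n, ‖p.coeff n‖ ≤ ‖p n‖ := by
    intro n
    calc ‖p.coeff n‖ ≤ ‖p n‖ * ∏ _i : Fin n, ‖(1:ℂ)‖ := (p n).le_opNorm _
    _ = ‖p n‖ := by simp
  have hderiv : deriv f 0 = p.coeff 1 := hp.hasFPowerSeriesAt.deriv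
  set g : ℕ → ℝ := fun n => ‖p n‖ * r ^ n with hgdef
  have hr0 : (r:ℂ) ≠ 0 := Complex.ofReal_ne_zero.mpr hr.ne'
  -- Main estimate for each `N ≥ 2`.
  have main : ∀ N : ℕ, 2 ≤ N →
      ‖(1 / ((N : ℂ) * (r : ℂ))) *
          (∑ k ∈ Finset.range N,
            f ((r : ℂ) * Complex.exp ((2 * π * k / N : ℝ) * Complex.I)) *
              Complex.exp (-((2 * π * k / N : ℝ) * Complex.I))) - p.coeff 1‖
        ≤ (∑' k, g (k + (N+1))) / r := by
    intro N hN
    -- Step 1: the estimator is the sum of the series `H`.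
    have hN0 : (N:ℂ) ≠ 0 := Nat.cast_ne_zero.mpr (by omega)
    set ω : ℂ := Complex.exp (2 * π * Complex.I / N) with hω
    have hprim : IsPrimitiveRoot ω N := Complex.isPrimitiveRoot_exp N (by omega)
    have hω0 : ω ≠ 0 := Complex.exp_ne_zero _
    have hek : ∀ k : ℕ, Complex.exp (((2 * π * k / N : ℝ) : ℂ) * Complex.I) = ω ^ k := by
      intro k
      rw [← Complex.exp_nat_mul]
      congr 1
      push_cast
      ring
    have hyk : ∀ k : ℕ, ‖(r:ℂ) * ω ^ k‖ = r := by
      intro k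
      have : ‖ω‖ = 1 := by
        have : (2 * π * Complex.I / N) = ((2 * π / N : ℝ) : ℂ) * Complex.I := by
          push_cast; ring
        rw [hω, this, Complex.norm_exp_ofReal_mul_I]
      simp [norm_mul, norm_pow, this, abs_of_pos hr]
    have h2 : HasSum
        (fun n : ℕ => ∑ k ∈ Finset.range N, p.coeff n * ((r:ℂ) * ω ^ k) ^ n * (ω ^ k)⁻¹)
        (∑ k ∈ Finset.range N, f ((r:ℂ) * ω ^ k) * (ω ^ k)⁻¹) :=
      hasSum_sum fun k _ => (key _ (hyk k)).mul_right _
    have h3 := h2.mul_left (1 / ((N : ℂ) * (r : ℂ)))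
    have hζ : ∀ n : ℕ, (ω ^ n * ω⁻¹ = 1) ↔ ((N:ℤ) ∣ (n:ℤ) - 1) := by
      intro n
      have : ω ^ n * ω⁻¹ = ω ^ ((n:ℤ) - 1) := by
        rw [zpow_sub₀ hω0, zpow_natCast, zpow_one, div_eq_mul_inv]
      rw [this, hprim.zpow_eq_one_iff_dvd]
    have hgeom : ∀ n : ℕ, ∑ k ∈ Finset.range N, (ω ^ n * ω⁻¹) ^ k
        = if (N:ℤ) ∣ (n:ℤ) - 1 then (N:ℂ) else 0 := by
      intro n
      by_cases h : (N:ℤ) ∣ (n:ℤ) - 1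
      · rw [if_pos h]
        simp [(hζ n).mpr h]
      · rw [if_neg h]
        have hne : ω ^ n * ω⁻¹ ≠ 1 := fun hc => h ((hζ n).mp hc)
        have hpow : (ω ^ n * ω⁻¹) ^ N = 1 := by
          have : ω ^ n * ω⁻¹ = ω ^ ((n:ℤ) - 1) := by
            rw [zpow_sub₀ hω0, zpow_natCast, zpow_one, div_eq_mul_inv]
          rw [this, ← zpow_natCast, ← zpow_mul, mul_comm, zpow_mul, zpow_natCast,
            hprim.pow_eq_one, one_zpow]
        rw [geom_sum_eq hne, hpow, sub_self, zero_div]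
    have hpt : ∀ n : ℕ,
        (1 / ((N : ℂ) * (r : ℂ))) *
          ∑ k ∈ Finset.range N, p.coeff n * ((r:ℂ) * ω ^ k) ^ n * (ω ^ k)⁻¹
        = if (N:ℤ) ∣ (n:ℤ) - 1 then p.coeff n * (r:ℂ)^n / r else 0 := by
      intro n
      have hterm : ∀ k, p.coeff n * ((r:ℂ) * ω ^ k) ^ n * (ω ^ k)⁻¹
          = (p.coeff n * (r:ℂ) ^ n) * (ω ^ n * ω⁻¹) ^ k := by
        intro k
        rw [mul_pow, mul_pow, ← pow_mul, ← pow_mul, inv_pow, ← inv_pow, mul_comm k n]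
        ring
      rw [Finset.sum_congr rfl (fun k _ => hterm k), ← Finset.mul_sum, hgeom n]
      by_cases h : (N:ℤ) ∣ (n:ℤ) - 1
      · rw [if_pos h, if_pos h]
        field_simp
      · simp [h]
    have heq : (fun n : ℕ => (1 / ((N : ℂ) * (r : ℂ))) *
          ∑ k ∈ Finset.range N, p.coeff n * ((r:ℂ) * ω ^ k) ^ n * (ω ^ k)⁻¹)
        = fun n : ℕ => if (N:ℤ) ∣ (n:ℤ) - 1 then p.coeff n * (r:ℂ)^n / r else 0 :=
      funext hpt
    rw [heq] at h3
    have hsum_eq :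
        (∑ k ∈ Finset.range N,
            f ((r : ℂ) * Complex.exp ((2 * π * k / N : ℝ) * Complex.I)) *
              Complex.exp (-((2 * π * k / N : ℝ) * Complex.I)))
          = ∑ k ∈ Finset.range N, f ((r:ℂ) * ω ^ k) * (ω ^ k)⁻¹ := by
      refine Finset.sum_congr rfl fun k _ => ?_
      rw [Complex.exp_neg, hek]
    rw [hsum_eq]
    -- Step 2: compare with the single term `p.coeff 1` and estimate the tail.
    set S : ℂ := (1 / ((N : ℂ) * (r : ℂ))) *
      ∑ k ∈ Finset.range N, f ((r:ℂ) * ω ^ k) * (ω ^ k)⁻¹ with hSdef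
    have hH : HasSum
        (fun n : ℕ => if (N:ℤ) ∣ (n:ℤ) - 1 then p.coeff n * (r:ℂ)^n / r else 0) S := h3
    set H : ℕ → ℂ := fun n => if (N:ℤ) ∣ (n:ℤ) - 1 then p.coeff n * (r:ℂ)^n / r else 0
      with hHdef
    have h5 : HasSum (fun n : ℕ => if n = 1 then p.coeff 1 else 0) (p.coeff 1) :=
      hasSum_ite_eq 1 _
    have h6 : HasSum (fun n : ℕ => H n - if n = 1 then p.coeff 1 else 0) (S - p.coeff 1) :=
      hH.sub h5
    set D : ℕ → ℂ := fun n => H n - if n = 1 then p.coeff 1 else 0 with hDdef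
    set i : ℕ → ℕ := fun m => (m + 1) * N + 1 with hidef
    have hi : Function.Injective i := by
      intro a b h
      simp only [hidef] at h
      have := Nat.eq_of_mul_eq_mul_right (show 0 < N by omega) (by omega : (a+1)*N = (b+1)*N)
      omega
    have hH1 : H 1 = p.coeff 1 := by
      simp only [hHdef]
      rw [if_pos (by simp), pow_one, mul_div_cancel_right₀ _ hr0]
    have hsupp : Function.support D ⊆ Set.range i := by
      intro n hn
      simp only [Function.mem_support, hDdef] at hn
      by_cases h1 : n = 1
      · exfalso; apply hn; rw [h1, hH1]; simp
      · rw [if_neg h1, sub_zero] at hn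
        have hdvd : (N:ℤ) ∣ (n:ℤ) - 1 := by
          by_contra hc
          apply hn
          simp only [hHdef]
          rw [if_neg hc]
        rcases n with _ | k
        · exfalso
          have : (N:ℤ) ∣ 1 := by simpa using (dvd_neg.mpr hdvd)
          have := Int.le_of_dvd one_pos this
          omega
        · have : (N:ℤ) ∣ (k:ℤ) := by simpa using hdvd
          obtain ⟨c, hc⟩ := Int.natCast_dvd_natCast.mp (by exact_mod_cast this)
          have hc0 : c ≠ 0 := by rintro rfl; omega
          refine ⟨c - 1, ?_⟩
          simp only [hidef]
          have : c - 1 + 1 = c := Nat.succ_pred_eq_of_pos (Nat.pos_of_ne_zero hc0)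
          rw [this, mul_comm]
          omega
    have hDi : ∀ m, D (i m) = p.coeff (i m) * (r:ℂ) ^ (i m) / r := by
      intro m
      have hne : i m ≠ 1 := by
        simp only [hidef]
        have : 0 < (m + 1) * N := Nat.mul_pos (by omega) (by omega)
        omega
      have hdvd : (N:ℤ) ∣ ((i m : ℕ) : ℤ) - 1 := by
        refine ⟨m + 1, ?_⟩
        simp only [hidef]
        push_cast
        ring
      simp only [hDdef, hHdef, if_neg hne, sub_zero, if_pos hdvd]
    have hDsum : Summable (fun m => D (i m)) := h6.summable.comp_injective hi
    have hDnorm : Summable (fun m => ‖D (i m)‖) := summable_norm_iff.mpr hDsum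
    have hgi : Summable (fun m => g (i m) / r) := (hg.comp_injective hi).div_const r
    have hbound : ∀ m, ‖D (i m)‖ ≤ g (i m) / r := by
      intro m
      rw [hDi m]
      have : ‖p.coeff (i m) * (r:ℂ) ^ (i m) / r‖ = ‖p.coeff (i m)‖ * r ^ (i m) / r := by
        rw [norm_div, norm_mul, norm_pow, Complex.norm_real, Real.norm_of_nonneg hr.le]
      rw [this]
      simp only [hgdef]
      gcongr
      exact hcoeff _
    have hgN : Summable (fun k => g (k + (N+1)) / r) :=
      ((summable_nat_add_iff (N+1)).mpr hg).div_const r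
    calc ‖S - p.coeff 1‖ = ‖∑' n, D n‖ := by rw [h6.tsum_eq]
      _ = ‖∑' m, D (i m)‖ := by rw [hi.tsum_eq hsupp]
      _ ≤ ∑' m, ‖D (i m)‖ := norm_tsum_le_tsum_norm hDnorm
      _ ≤ ∑' m, g (i m) / r := Summable.tsum_le_tsum hbound hDnorm hgi
      _ ≤ ∑' k, g (k + (N+1)) / r := by
          refine Summable.tsum_le_tsum_of_inj (fun m => m * N) ?_ ?_ ?_ hgi hgN
          · intro a b h
            exact Nat.eq_of_mul_eq_mul_right (by omega) h
          · intro c _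
            have : 0 ≤ g (c + (N+1)) := by
              simp only [hgdef]; positivity
            positivity
          · intro m
            have : i m = m * N + (N + 1) := by simp only [hidef]; ring
            rw [this]
      _ = (∑' k, g (k + (N+1))) / r := tsum_div_const
  -- Conclude by the squeeze theorem.
  rw [hderiv, tendsto_iff_norm_sub_tendsto_zero]
  have hb : Tendsto (fun N : ℕ => (∑' k, g (k + (N+1))) / r) atTop (𝓝 0) := by
    have h0 : Tendsto (fun N : ℕ => ∑' k, g (k + N)) atTop (𝓝 0) := tendsto_sum_nat_add g
    have h1 := h0.comp (tendsto_add_atTop_nat 1)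
    have h2 := h1.div_const r
    simpa using h2
  refine squeeze_zero' (Filter.Eventually.of_forall fun _ => norm_nonneg _) ?_ hb
  filter_upwards [eventually_ge_atTop 2] with N hN
  exact main N hN
end

section
/- Let r > 0, let f : ℂ → ℂ be complex-differentiable on an open set U ⊆ ℂ containing the closed disk {z : ℂ | ‖z‖ ≤ r}, and let N ≥ 2 be a natural number. Define ∇̂(N) = (1/(N·r)) · Σ_{k=0}^{N−1} f(r·exp(2πi k / N))·exp(−2πi k / N). Then ‖∇̂(N) − deriv f 0‖ ≤ Σ_{p=N}^{∞} ‖iteratedDeriv (p + 1) f 0‖ · r^p / (p + 1)!. -/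
open scoped Real

/-- Quantitative bound on the bias of the `N`-point estimator: its norm is bounded by
the tail, from order `N` on, of the absolute Taylor series of `f` at `0` evaluated at
radius `r`. -/
theorem bias_of_N_point_estimator_norm_le
    (r : ℝ) (hr : 0 < r)
    (f : ℂ → ℂ) (U : Set ℂ) (hU : IsOpen U)
    (hdisk : {z : ℂ | ‖z‖ ≤ r} ⊆ U)
    (hf : DifferentiableOn ℂ f U)
    (N : ℕ) (hN : 2 ≤ N) :
    ‖(1 / ((N : ℂ) * (r : ℂ))) *
        (∑ k ∈ Finset.range N,
          f ((r : ℂ) * Complex.exp ((2 * π * k / N : ℝ) * Complex.I)) *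
            Complex.exp (-((2 * π * k / N : ℝ) * Complex.I)))
      - deriv f 0‖
      ≤ ∑' p : ℕ,
          ‖iteratedDeriv (N + p + 1) f 0‖ * r ^ (N + p) /
            (Nat.factorial (N + p + 1) : ℝ) := by
  have hN0 : (N : ℝ) ≠ 0 := by positivity
  -- Step 1: find R > r with ball 0 R ⊆ U
  obtain ⟨ε, hε, hthick⟩ :=
    (isCompact_closedBall (0 : ℂ) r).exists_thickening_subset_open hU
      (by intro z hz; exact hdisk (by simpa [Metric.mem_closedBall, dist_zero_right] using hz))
  set R : ℝ := r + ε with hR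
  have hrR : r < R := by simp [hR, hε]
  have hball : Metric.ball (0 : ℂ) R ⊆ U := by
    rw [hR, add_comm r ε, ← thickening_closedBall hε hr.le (0 : ℂ)]
    exact hthick
  have hfR : DifferentiableOn ℂ f (Metric.ball (0 : ℂ) R) := hf.mono hball
  -- Taylor coefficients
  set a : ℕ → ℂ := fun n => ((n.factorial : ℂ))⁻¹ * iteratedDeriv n f 0 with ha
  have hsum_at : ∀ z : ℂ, ‖z‖ < R → HasSum (fun n => a n * z ^ n) (f z) := by
    intro z hz
    have := Complex.hasSum_taylorSeries_on_ball hfR (by simpa [Metric.mem_ball, dist_zero_right] using hz)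
    simpa [ha, sub_zero, smul_eq_mul, mul_comm, mul_left_comm, mul_assoc] using this
  -- Step 2: absolute summability at radius r
  have hA : Summable (fun n => ‖a n‖ * r ^ n) := by
    obtain ⟨r', h1, h2⟩ := exists_between hrR
    have h0 : 0 < r' := lt_trans hr h1
    have hs := (hsum_at (r' : ℂ) (by
      simpa [Complex.norm_real, abs_of_pos h0] using h2)).summable
    obtain ⟨C, hC⟩ := (hs.tendsto_atTop_zero.norm).bddAbove_range
    refine Summable.of_nonneg_of_le (fun n => mul_nonneg (norm_nonneg _) (by positivity))
      (f := fun n => C * (r / r') ^ n) (fun n => ?_) ?_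
    · have hCn : ‖a n‖ * r' ^ n ≤ C := by
        have := hC (Set.mem_range_self n)
        simpa [norm_mul, norm_pow, Complex.norm_real, abs_of_pos h0] using this
      have hrn : r ^ n = r' ^ n * (r / r') ^ n := by
        rw [div_pow]
        field_simp
      calc ‖a n‖ * r ^ n = (‖a n‖ * r' ^ n) * (r / r') ^ n := by
            rw [hrn]; ring
          _ ≤ C * (r / r') ^ n := mul_le_mul_of_nonneg_right hCn (by positivity)
    · exact (summable_geometric_of_lt_one (by positivity)
        (by rw [div_lt_one h0]; exact h1)).mul_left C
  -- primitive root
  set ζ : ℂ := Complex.exp (2 * ↑π * Complex.I / N) with hζdef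
  have hζ : IsPrimitiveRoot ζ N := Complex.isPrimitiveRoot_exp N (by omega)
  have hζ1 : ∀ k : ℕ, ‖ζ ^ k‖ = 1 := by
    intro k
    simp [hζdef, ← Complex.exp_nat_mul, Complex.norm_exp]

  have hζ0 : ζ ≠ 0 := Complex.exp_ne_zero _
  -- per-k expansion
  have hT : ∀ k : ℕ, HasSum (fun n => a n * (r : ℂ) ^ n * ζ ^ (k * n) * (ζ ^ k)⁻¹)
      (f ((r : ℂ) * ζ ^ k) * (ζ ^ k)⁻¹) := by
    intro k
    have hnorm : ‖(r : ℂ) * ζ ^ k‖ < R := by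
      rw [norm_mul, hζ1 k, mul_one, Complex.norm_real, Real.norm_eq_abs, abs_of_pos hr]; exact hrR
    have h := (hsum_at _ hnorm).mul_right (ζ ^ k)⁻¹
    have he : (fun n => a n * ((r : ℂ) * ζ ^ k) ^ n * (ζ ^ k)⁻¹)
        = fun n => a n * (r : ℂ) ^ n * ζ ^ (k * n) * (ζ ^ k)⁻¹ := by
      funext n
      rw [mul_pow, mul_comm k n, pow_mul]
      ring
    rwa [he] at h
  -- the roots-of-unity filter
  have hg : ∀ n : ℕ, (∑ k ∈ Finset.range N, ζ ^ (k * n) * (ζ ^ k)⁻¹)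
      = if ((N : ℤ) ∣ (n : ℤ) - 1) then (N : ℂ) else 0 := by
    intro n
    have hterm : ∀ k : ℕ, ζ ^ (k * n) * (ζ ^ k)⁻¹ = (ζ ^ ((n : ℤ) - 1)) ^ k := by
      intro k
      rw [← zpow_natCast ζ (k * n), ← zpow_natCast ζ k, ← zpow_neg, ← zpow_add₀ hζ0,
        ← zpow_natCast (ζ ^ ((n : ℤ) - 1)) k, ← zpow_mul]
      congr 1
      push_cast
      ring
    rw [Finset.sum_congr rfl fun k _ => hterm k]
    by_cases hdvd : (N : ℤ) ∣ (n : ℤ) - 1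
    · rw [if_pos hdvd, (hζ.zpow_eq_one_iff_dvd _).mpr hdvd]
      simp
    · rw [if_neg hdvd]
      have hw1 : ζ ^ ((n : ℤ) - 1) ≠ 1 := fun h => hdvd ((hζ.zpow_eq_one_iff_dvd _).mp h)
      have hwN : (ζ ^ ((n : ℤ) - 1)) ^ N = 1 := by
        rw [← zpow_natCast (ζ ^ ((n : ℤ) - 1)) N, ← zpow_mul, mul_comm, zpow_mul,
          zpow_natCast, hζ.pow_eq_one, one_zpow]
      rw [geom_sum_eq hw1, hwN, sub_self, zero_div]
  set F : ℕ → ℂ := fun n => (a n * (r : ℂ) ^ n) *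
    (if ((N : ℤ) ∣ (n : ℤ) - 1) then (N : ℂ) else 0) with hF
  have hFsummable : Summable F := by
    have h1 : Summable (fun n => ∑ k ∈ Finset.range N,
        a n * (r : ℂ) ^ n * ζ ^ (k * n) * (ζ ^ k)⁻¹) :=
      summable_sum fun k _ => (hT k).summable
    refine h1.congr fun n => ?_
    rw [hF]
    have : ∀ k : ℕ, a n * (r : ℂ) ^ n * ζ ^ (k * n) * (ζ ^ k)⁻¹
        = (a n * (r : ℂ) ^ n) * (ζ ^ (k * n) * (ζ ^ k)⁻¹) := fun k => by ring
    rw [Finset.sum_congr rfl fun k _ => this k, ← Finset.mul_sum, hg n]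
  have hswap : (∑ k ∈ Finset.range N, f ((r : ℂ) * ζ ^ k) * (ζ ^ k)⁻¹) = ∑' n, F n := by
    calc ∑ k ∈ Finset.range N, f ((r : ℂ) * ζ ^ k) * (ζ ^ k)⁻¹
        = ∑ k ∈ Finset.range N, ∑' n, a n * (r : ℂ) ^ n * ζ ^ (k * n) * (ζ ^ k)⁻¹ :=
          Finset.sum_congr rfl fun k _ => ((hT k).tsum_eq).symm
      _ = ∑' n, ∑ k ∈ Finset.range N, a n * (r : ℂ) ^ n * ζ ^ (k * n) * (ζ ^ k)⁻¹ :=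
          (Summable.tsum_finsetSum fun k _ => (hT k).summable).symm
      _ = ∑' n, F n := by
          refine tsum_congr fun n => ?_
          have : ∀ k : ℕ, a n * (r : ℂ) ^ n * ζ ^ (k * n) * (ζ ^ k)⁻¹
              = (a n * (r : ℂ) ^ n) * (ζ ^ (k * n) * (ζ ^ k)⁻¹) := fun k => by ring
          rw [Finset.sum_congr rfl fun k _ => this k, ← Finset.mul_sum, hg n, hF]
  -- reindex the surviving terms
  set i : ℕ → ℕ := fun m => 1 + m * N with hi
  have hinj : Function.Injective i := by
    intro x y h
    simp only [hi] at h
    have h' : x * N = y * N := by omega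
    exact Nat.eq_of_mul_eq_mul_right (by omega) h'
  have hsupp : Function.support F ⊆ Set.range i := by
    intro n hn
    rw [Function.mem_support, hF] at hn
    by_cases hdvd : (N : ℤ) ∣ (n : ℤ) - 1
    · have hN2 : (2 : ℤ) ≤ (N : ℤ) := by exact_mod_cast hN
      have hn1 : 1 ≤ n := by
        rcases Nat.eq_zero_or_pos n with h0 | h0
        · exfalso
          rw [h0] at hdvd
          have hd1 : (N : ℤ) ∣ 1 := by simpa using hdvd.neg_right
          have hle : (N : ℤ) ≤ 1 := Int.le_of_dvd (by norm_num) hd1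
          omega
        · omega
      obtain ⟨m, hm⟩ := hdvd
      have hm0 : 0 ≤ m := by
        rcases le_or_gt 0 m with h | h
        · exact h
        · exfalso
          have h3 : (N : ℤ) * m ≤ -(N : ℤ) := by nlinarith
          have h4 : (0 : ℤ) ≤ (n : ℤ) := Int.natCast_nonneg n
          omega
      lift m to ℕ using hm0
      refine ⟨m, ?_⟩
      have hm'' : n = 1 + m * N := by
        have h5 : (n : ℤ) = 1 + (m : ℤ) * (N : ℤ) := by linear_combination hm
        exact_mod_cast h5
      simp only [hi]
      omega
    · exfalso
      apply hn
      simp [hdvd]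
  set u : ℕ → ℂ := fun m => a (1 + m * N) * (r : ℂ) ^ (m * N) with hu
  have hFu : ∀ m : ℕ, F (i m) = ((N : ℂ) * r) * u m := by
    intro m
    have hdvd : (N : ℤ) ∣ ((1 + m * N : ℕ) : ℤ) - 1 := ⟨m, by push_cast; ring⟩
    simp only [hF, hi, hu, if_pos hdvd]
    rw [pow_add, pow_one]
    ring
  have hFt : ∑' n, F n = ((N : ℂ) * r) * ∑' m, u m := by
    rw [← Function.Injective.tsum_eq hinj hsupp, tsum_congr hFu, tsum_mul_left]
  have hNr : ((N : ℂ) * r) ≠ 0 := by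
    apply mul_ne_zero
    · exact_mod_cast (by positivity : (N : ℝ) ≠ 0)
    · exact_mod_cast hr.ne'
  have husum : Summable u := by
    have h1 : Summable (F ∘ i) := hFsummable.comp_injective hinj
    have h2 : Summable (fun m => ((N : ℂ) * r)⁻¹ * (F ∘ i) m) := h1.mul_left _
    refine h2.congr fun m => ?_
    simp only [Function.comp_apply, hFu m]
    rw [← mul_assoc, inv_mul_cancel₀ hNr, one_mul]
  -- identify the estimator
  have hek : ∀ k : ℕ, Complex.exp (((2 * π * (k : ℝ) / (N : ℝ) : ℝ) : ℂ) * Complex.I)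
      = ζ ^ k := by
    intro k
    rw [hζdef, ← Complex.exp_nat_mul]
    congr 1
    push_cast
    ring
  have hest : (1 / ((N : ℂ) * (r : ℂ))) *
      (∑ k ∈ Finset.range N,
        f ((r : ℂ) * Complex.exp ((2 * π * k / N : ℝ) * Complex.I)) *
          Complex.exp (-((2 * π * k / N : ℝ) * Complex.I))) = ∑' m, u m := by
    simp only [Complex.exp_neg, hek]
    rw [hswap, hFt, one_div, inv_mul_cancel_left₀ hNr]
  have hu0 : u 0 = deriv f 0 := by
    simp [hu, ha, iteratedDeriv_one]
  have hnormu : ∀ m : ℕ, ‖u m‖ = ‖a (1 + m * N)‖ * r ^ (m * N) := by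
    intro m
    rw [hu]
    simp only
    rw [norm_mul, norm_pow, Complex.norm_real, Real.norm_eq_abs, abs_of_pos hr]
  have husucc : Summable fun m => ‖u (m + 1)‖ := by
    have hinj2 : Function.Injective (fun m : ℕ => 1 + (m + 1) * N) := by
      intro x y h
      simp only at h
      have h' : (x + 1) * N = (y + 1) * N := by omega
      have := Nat.eq_of_mul_eq_mul_right (show 0 < N by omega) h'
      omega
    have h1 := hA.comp_injective hinj2
    have h2 : Summable (fun m => r⁻¹ * (‖a (1 + (m + 1) * N)‖ * r ^ (1 + (m + 1) * N))) :=
      h1.mul_left _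
    refine h2.congr fun m => ?_
    rw [hnormu (m + 1), pow_add, pow_one]
    field_simp
  have hbias : (1 / ((N : ℂ) * (r : ℂ))) *
      (∑ k ∈ Finset.range N,
        f ((r : ℂ) * Complex.exp ((2 * π * k / N : ℝ) * Complex.I)) *
          Complex.exp (-((2 * π * k / N : ℝ) * Complex.I)))
      - deriv f 0 = ∑' m, u (m + 1) := by
    rw [hest, ← hu0, husum.tsum_eq_zero_add]
    ring
  rw [hbias]
  -- RHS as ‖a‖ terms
  have hRHSsummable : Summable (fun p => ‖a (N + p + 1)‖ * r ^ (N + p)) := by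
    have hinj3 : Function.Injective (fun p : ℕ => N + p + 1) := by
      intro x y h
      simp only at h
      omega
    have h1 := hA.comp_injective hinj3
    have h2 : Summable (fun p => r⁻¹ * (‖a (N + p + 1)‖ * r ^ (N + p + 1))) := h1.mul_left _
    refine h2.congr fun p => ?_
    rw [pow_succ]
    field_simp
  have hRHS : (∑' p : ℕ, ‖iteratedDeriv (N + p + 1) f 0‖ * r ^ (N + p) /
      (Nat.factorial (N + p + 1) : ℝ)) = ∑' p, ‖a (N + p + 1)‖ * r ^ (N + p) := by
    refine tsum_congr fun p => ?_
    rw [ha]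
    simp only
    rw [norm_mul, norm_inv, Complex.norm_natCast]
    field_simp
  rw [hRHS]
  calc ‖∑' m, u (m + 1)‖ ≤ ∑' m, ‖u (m + 1)‖ := norm_tsum_le_tsum_norm husucc
    _ ≤ ∑' p, ‖a (N + p + 1)‖ * r ^ (N + p) := by
        refine husucc.tsum_le_tsum_of_inj (fun m => m * N)
          (fun x y h => Nat.eq_of_mul_eq_mul_right (show 0 < N by omega) h)
          (fun c _ => by positivity) (fun m => ?_) hRHSsummable
        have h1 : 1 + (m + 1) * N = N + m * N + 1 := by ring
        have h2 : (m + 1) * N = N + m * N := by ring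
        rw [hnormu (m + 1), h1, h2]
end

section
/- Let r > 0 and T > 0, and let f : ℂ → ℂ be complex-differentiable on an open set U ⊆ ℂ containing the closed disk {z : ℂ | ‖z‖ ≤ r}. Assume f is real on the real axis: f(x) ∈ ℝ (i.e. has zero imaginary part) for every real x with |x| ≤ r. Then deriv f 0 = (2/(r·T)) · ∫_{t=0}^{T} Re(f(r·exp(2πi t / T))) · cos(2π t / T) dt, where the right-hand side is a real number regarded as a complex number. -/
open scoped Real

/-- Appendix A.3: when `f` is real on the real axis, the exact gradient can be
recovered from the real part alone of the complex oscillation along the circular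
teaching path, by projecting against the cosine of the teaching frequency. -/
theorem deriv_from_real_part_cosine
    (r T : ℝ) (hr : 0 < r) (hT : 0 < T)
    (f : ℂ → ℂ) (U : Set ℂ) (hU : IsOpen U)
    (hdisk : {z : ℂ | ‖z‖ ≤ r} ⊆ U)
    (hf : DifferentiableOn ℂ f U)
    (hreal : ∀ x : ℝ, |x| ≤ r → (f (x : ℂ)).im = 0) :
    deriv f 0
      = (((2 / (r * T)) *
          ∫ t in (0 : ℝ)..T,
            (f ((r : ℂ) * Complex.exp ((2 * π * t / T : ℝ) * Complex.I))).re *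
              Real.cos (2 * π * t / T) : ℝ) : ℂ) := by
  have hπ := Real.pi_pos
  have hrC : (r : ℂ) ≠ 0 := Complex.ofReal_ne_zero.mpr hr.ne'
  have hball : Metric.closedBall (0:ℂ) r ⊆ U := fun z hz =>
    hdisk (by simpa [Metric.mem_closedBall, Complex.dist_eq] using hz)
  have hFc : Continuous fun θ : ℝ => f (circleMap 0 r θ) :=
    hf.continuousOn.comp_continuous (continuous_circleMap 0 r)
      (fun θ => hball (circleMap_mem_closedBall 0 hr.le θ))
  set Iint : ℂ := ∫ θ in (0:ℝ)..2*π,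
      Complex.exp (-(θ:ℂ)*Complex.I) * f (circleMap 0 r θ) with hIint
  set Jint : ℂ := ∫ θ in (0:ℝ)..2*π,
      Complex.exp ((θ:ℂ)*Complex.I) * f (circleMap 0 r θ) with hJint
  -- Step 1: Cauchy formula for the derivative
  have hderiv : (2*(π:ℂ)*r) * deriv f 0 = Iint := by
    set R : NNReal := ⟨r, hr.le⟩ with hR
    have hdOn : DifferentiableOn ℂ f (Metric.closedBall (0:ℂ) R) := hf.mono hball
    have hps := hdOn.hasFPowerSeriesOnBall (by exact_mod_cast hr)
    have h1 : deriv f 0 = cauchyPowerSeries f 0 R 1 (fun _ => 1) :=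
      hps.hasFPowerSeriesAt.deriv
    rw [cauchyPowerSeries_apply] at h1
    have h2 : (∮ z in C(0, (R:ℝ)), ((1:ℂ)/(z-0))^1 • (z-0)⁻¹ • f z)
        = (Complex.I / r) * Iint := by
      rw [circleIntegral, hIint, ← intervalIntegral.integral_const_mul]
      refine intervalIntegral.integral_congr fun θ _ => ?_
      have he : Complex.exp ((θ:ℂ)*Complex.I) ≠ 0 := Complex.exp_ne_zero _
      simp only [deriv_circleMap, smul_eq_mul, circleMap_zero, sub_zero, one_div, pow_one,
        neg_mul, Complex.exp_neg, hR, NNReal.coe_mk]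
      field_simp
      change f ((r:ℂ) * Complex.exp ((θ:ℂ) * Complex.I)) * (r:ℂ) / (r:ℂ) = _
      rw [mul_div_assoc, div_self hrC, mul_one, mul_comm]
    rw [h2] at h1
    have hRr : (R : ℝ) = r := rfl
    rw [h1]
    field_simp [Complex.I_ne_zero, Real.pi_ne_zero]
    have hπC : (π:ℂ) ≠ 0 := Complex.ofReal_ne_zero.mpr Real.pi_ne_zero
    calc _ = Iint * ((π:ℂ) * (π:ℂ)⁻¹) * ((r:ℂ) * (r:ℂ)⁻¹) * (Complex.I * Complex.I⁻¹) := by ring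
      _ = Iint := by
        rw [mul_inv_cancel₀ hπC, mul_inv_cancel₀ hrC, mul_inv_cancel₀ Complex.I_ne_zero]; ring
  -- Step 2: Jint = 0
  have hJ : Jint = 0 := by
    have h0 : (∮ z in C(0, r), f z) = 0 :=
      Complex.circleIntegral_eq_zero_of_differentiable_on_off_countable hr.le Set.countable_empty
        (hf.continuousOn.mono hball)
        (fun z hz => hf.differentiableAt (hU.mem_nhds (hball (Metric.ball_subset_closedBall hz.1))))
    have h1 : (∮ z in C(0, r), f z) = ((r:ℂ)*Complex.I) * Jint := by
      rw [circleIntegral, hJint, ← intervalIntegral.integral_const_mul]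
      refine intervalIntegral.integral_congr fun θ _ => ?_
      simp only [deriv_circleMap, smul_eq_mul, circleMap_zero]
      ring
    rw [h0] at h1
    rcases mul_eq_zero.mp h1.symm with h | h
    · exact absurd h (mul_ne_zero hrC Complex.I_ne_zero)
    · exact h
  -- Step 3: the cosine-projected real integral is Re(Iint)/2
  have hK : (∫ θ in (0:ℝ)..2*π, (f (circleMap 0 r θ)).re * Real.cos θ) = Iint.re / 2 := by
    have hint : IntervalIntegrable (fun θ : ℝ => f (circleMap 0 r θ) * Complex.cos (θ:ℂ))
        MeasureTheory.volume 0 (2*π) :=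
      (hFc.mul (Complex.continuous_cos.comp Complex.continuous_ofReal)).intervalIntegrable _ _
    have hint1 : IntervalIntegrable
        (fun θ : ℝ => Complex.exp (-(θ:ℂ)*Complex.I) * f (circleMap 0 r θ))
        MeasureTheory.volume 0 (2*π) :=
      (((Complex.continuous_ofReal.neg.mul continuous_const).cexp).mul hFc).intervalIntegrable _ _
    have hint2 : IntervalIntegrable
        (fun θ : ℝ => Complex.exp ((θ:ℂ)*Complex.I) * f (circleMap 0 r θ))
        MeasureTheory.volume 0 (2*π) :=
      (((Complex.continuous_ofReal.mul continuous_const).cexp).mul hFc).intervalIntegrable _ _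
    have h1 : (∫ θ in (0:ℝ)..2*π, (f (circleMap 0 r θ)).re * Real.cos θ)
        = Complex.reCLM (∫ θ in (0:ℝ)..2*π, f (circleMap 0 r θ) * Complex.cos (θ:ℂ)) := by
      rw [← Complex.reCLM.intervalIntegral_comp_comm hint]
      refine intervalIntegral.integral_congr fun θ _ => ?_
      simp [← Complex.ofReal_cos, Complex.mul_re]
    have h2 : (∫ θ in (0:ℝ)..2*π, f (circleMap 0 r θ) * Complex.cos (θ:ℂ))
        = (Iint + Jint) / 2 := by
      rw [hIint, hJint, ← intervalIntegral.integral_add hint1 hint2,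
        ← intervalIntegral.integral_div]
      refine intervalIntegral.integral_congr fun θ _ => ?_
      have := Complex.two_cos (x := (θ:ℂ))
      simp only [neg_mul] at this ⊢
      field_simp
      linear_combination f (circleMap 0 r θ) * this
    rw [h1, h2, hJ, add_zero]
    simp [Complex.div_re]
  -- Step 4: the derivative at 0 is real
  have him0 : (deriv f 0).im = 0 := by
    have hd0 : DifferentiableAt ℂ f 0 :=
      hf.differentiableAt (hU.mem_nhds (hdisk (by simp [hr.le])))
    have hD : HasDerivAt (fun x : ℝ => f x) (deriv f 0) 0 := by
      have := hd0.hasDerivAt.comp_ofReal (z := 0)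
      simpa using this
    have hIm : HasDerivAt (fun x : ℝ => (f x).im) (deriv f 0).im 0 := by
      have := Complex.imCLM.hasFDerivAt.comp_hasDerivAt (0:ℝ) hD
      exact this
    have hz : (fun x : ℝ => (f x).im) =ᶠ[nhds (0:ℝ)] fun _ => 0 := by
      filter_upwards [Metric.ball_mem_nhds (0:ℝ) hr] with x hx
      exact hreal x (le_of_lt (by simpa [Real.dist_eq] using hx))
    have h3 : HasDerivAt (fun _ : ℝ => (0:ℝ)) (deriv f 0).im 0 :=
      hIm.congr_of_eventuallyEq hz.symm
    have := h3.unique (hasDerivAt_const 0 0)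
    simpa using this
  have him : Iint.im = 0 := by
    have : Iint = ((2*π*r : ℝ) : ℂ) * deriv f 0 := by
      rw [← hderiv]; push_cast; ring
    rw [this]
    simp [Complex.mul_im, him0]
  -- Step 5: change of variables t ↦ θ = 2πt/T
  have hsub : (∫ t in (0:ℝ)..T,
        (f ((r : ℂ) * Complex.exp ((2 * π * t / T : ℝ) * Complex.I))).re *
          Real.cos (2 * π * t / T))
      = (2*π/T)⁻¹ * ∫ θ in (0:ℝ)..2*π, (f (circleMap 0 r θ)).re * Real.cos θ := by
    have hc : (2*π/T) ≠ 0 := by positivity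
    have h := intervalIntegral.integral_comp_mul_left (a := 0) (b := T)
      (f := fun θ : ℝ => (f ((r : ℂ) * Complex.exp ((θ:ℝ) * Complex.I))).re * Real.cos θ)
      hc
    rw [show (2*π/T) * 0 = 0 by ring, show (2*π/T)*T = 2*π by field_simp] at h
    have h1 : (∫ t in (0:ℝ)..T,
        (f ((r : ℂ) * Complex.exp ((2 * π * t / T : ℝ) * Complex.I))).re *
          Real.cos (2 * π * t / T))
        = ∫ t in (0:ℝ)..T,
        (f ((r : ℂ) * Complex.exp (((2*π/T*t : ℝ)) * Complex.I))).re *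
          Real.cos (2*π/T*t) := by
      refine intervalIntegral.integral_congr fun t _ => ?_
      rw [show 2*π*t/T = 2*π/T*t by ring]
    rw [h1, h, smul_eq_mul]
    congr 1
    refine intervalIntegral.integral_congr fun θ _ => ?_
    rw [circleMap_zero]
  -- Assemble
  rw [hsub, hK]
  have hIre : Iint = ((Iint.re : ℝ) : ℂ) := Complex.ext rfl (by simpa using him)
  have h2πr : ((2*π*r : ℝ) : ℂ) ≠ 0 := by
    simpa using mul_ne_zero (mul_ne_zero two_ne_zero Real.pi_ne_zero) hr.ne'
  have hd : deriv f 0 = ((Iint.re : ℝ) : ℂ) / ((2*π*r : ℝ) : ℂ) := by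
    rw [eq_div_iff h2πr, ← hIre]
    rw [← hderiv]; push_cast; ring
  rw [hd, ← Complex.ofReal_div]
  norm_cast
  field_simp
end

section
/- Let r > 0 and T > 0, and let f : ℂ → ℂ be complex-differentiable on an open set U ⊆ ℂ containing the closed disk {z : ℂ | ‖z‖ ≤ r}. Assume f is real on the real axis: f(x) ∈ ℝ for every real x with |x| ≤ r. Then deriv f 0 = (2/(r·T)) · ∫_{t=0}^{T} Im(f(r·exp(2πi t / T))) · sin(2π t / T) dt, where the right-hand side is a real number regarded as a complex number. -/
open scoped Real

open Metric intervalIntegral in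
/-- Appendix A.3: when `f` is real on the real axis, the exact gradient can equally be
recovered from the imaginary part alone of the complex oscillation along the circular
teaching path, by projecting against the sine of the teaching frequency. -/
theorem deriv_from_imaginary_part_sine
    (r T : ℝ) (hr : 0 < r) (hT : 0 < T)
    (f : ℂ → ℂ) (U : Set ℂ) (hU : IsOpen U)
    (hdisk : {z : ℂ | ‖z‖ ≤ r} ⊆ U)
    (hf : DifferentiableOn ℂ f U)
    (hreal : ∀ x : ℝ, |x| ≤ r → (f (x : ℂ)).im = 0) :
    deriv f 0
      = (((2 / (r * T)) *
          ∫ t in (0 : ℝ)..T,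
            (f ((r : ℂ) * Complex.exp ((2 * π * t / T : ℝ) * Complex.I))).im *
              Real.sin (2 * π * t / T) : ℝ) : ℂ) := by
  have hball : closedBall (0:ℂ) r ⊆ U := by
    intro z hz
    apply hdisk
    simpa [mem_closedBall_zero_iff] using hz
  have hfc : ContinuousOn f (closedBall (0:ℂ) r) := hf.continuousOn.mono hball
  have hfd : DiffContOnCl ℂ f (ball (0:ℂ) r) :=
    ⟨hf.mono ((ball_subset_closedBall).trans hball),
      by rw [closure_ball _ hr.ne']; exact hfc⟩
  set g : ℝ → ℂ := fun θ => f (circleMap 0 r θ) with hg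
  have hgc : Continuous g :=
    hfc.comp_continuous (continuous_circleMap 0 r)
      (fun θ => circleMap_mem_closedBall 0 hr.le θ)
  have hexpc : Continuous fun θ : ℝ => Complex.exp (-(θ:ℂ) * Complex.I) :=
    Complex.continuous_exp.comp ((Complex.continuous_ofReal.neg).mul continuous_const)
  have hexpc' : Continuous fun θ : ℝ => Complex.exp ((θ:ℂ) * Complex.I) :=
    Complex.continuous_exp.comp (Complex.continuous_ofReal.mul continuous_const)
  -- Cauchy integral formula for the derivative
  have hA : deriv f 0 = (2 * π * Complex.I : ℂ)⁻¹ • ∮ z in C((0:ℂ), r), (z - 0) ^ (-2 : ℤ) • f z := by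
    have h := hfd.deriv_eq_smul_circleIntegral hr
    have e : (∮ z in C((0:ℂ), r), (z - 0) ^ (-2 : ℤ) • f z)
        = ∮ z in C((0:ℂ), r), (1 / (z - 0) ^ 2) • f z := by
      simp [zpow_neg, one_div]
    rw [e, h, smul_smul, inv_mul_cancel₀ Complex.two_pi_I_ne_zero, one_smul]
  -- Cauchy-Goursat
  have hB : (∮ z in C((0:ℂ), r), f z) = 0 :=
    Complex.circleIntegral_eq_zero_of_differentiable_on_off_countable hr.le
      Set.countable_empty hfc
      (fun z hz => hf.differentiableAt
        (hU.mem_nhds (hball (ball_subset_closedBall hz.1))))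
  -- integrability of the relevant integrands
  have hint1 : IntervalIntegrable (fun θ : ℝ => Complex.exp (-(θ:ℂ) * Complex.I) * g θ)
      MeasureTheory.volume 0 (2*π) := (hexpc.mul hgc).intervalIntegrable 0 (2*π)
  have hint2 : IntervalIntegrable (fun θ : ℝ => Complex.exp ((θ:ℂ) * Complex.I) * g θ)
      MeasureTheory.volume 0 (2*π) := (hexpc'.mul hgc).intervalIntegrable 0 (2*π)
  have hrc : (r:ℂ) ≠ 0 := by exact_mod_cast hr.ne'
  have hπc : (π:ℂ) ≠ 0 := by exact_mod_cast Real.pi_ne_zero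
  -- I2 = 0
  have hI2 : (∫ θ in (0:ℝ)..2*π, Complex.exp ((θ:ℂ) * Complex.I) * g θ) = 0 := by
    have h' : (∫ θ in (0:ℝ)..2*π,
        (r:ℂ) * Complex.I * (Complex.exp ((θ:ℂ) * Complex.I) * g θ)) = 0 := by
      rw [← hB]
      rw [circleIntegral]
      apply intervalIntegral.integral_congr
      intro θ _
      simp only [deriv_circleMap, circleMap_zero, smul_eq_mul, hg]
      ring
    rw [intervalIntegral.integral_const_mul] at h'
    have hrI : (r:ℂ) * Complex.I ≠ 0 := mul_ne_zero hrc Complex.I_ne_zero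
    exact (mul_eq_zero.mp h').resolve_left hrI
  -- rewrite the Cauchy formula
  have hA2 : deriv f 0
      = ((2*π*r : ℝ):ℂ)⁻¹ *
          ∫ θ in (0:ℝ)..2*π, Complex.exp (-(θ:ℂ) * Complex.I) * g θ := by
    rw [hA, circleIntegral]
    have hpt : ∀ θ ∈ Set.uIcc (0:ℝ) (2*π),
        deriv (circleMap 0 r) θ • ((circleMap 0 r θ - 0) ^ (-2:ℤ) • f (circleMap 0 r θ))
          = Complex.I * (r:ℂ)⁻¹ * (Complex.exp (-(θ:ℂ) * Complex.I) * g θ) := by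
      intro θ _
      have hexp : Complex.exp ((θ:ℂ) * Complex.I) ≠ 0 := Complex.exp_ne_zero _
      simp only [deriv_circleMap, circleMap_zero, smul_eq_mul, sub_zero, hg,
        zpow_neg, zpow_two, neg_mul, Complex.exp_neg]
      field_simp
    rw [intervalIntegral.integral_congr hpt, intervalIntegral.integral_const_mul,
      smul_eq_mul, ← mul_assoc]
    congr 1
    push_cast
    field_simp
  -- replace exp(-θI) by exp(-θI) - exp(θI) = -2 I sin θ
  have hJ : deriv f 0
      = ((2*π*r : ℝ):ℂ)⁻¹ * (-2*Complex.I) *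
          ∫ θ in (0:ℝ)..2*π, ((Real.sin θ : ℝ):ℂ) * g θ := by
    rw [hA2]
    have h1 : (∫ θ in (0:ℝ)..2*π, Complex.exp (-(θ:ℂ) * Complex.I) * g θ)
        = ∫ θ in (0:ℝ)..2*π,
            (Complex.exp (-(θ:ℂ) * Complex.I) * g θ
              - Complex.exp ((θ:ℂ) * Complex.I) * g θ) := by
      rw [intervalIntegral.integral_sub hint1 hint2, hI2, sub_zero]
    rw [h1]
    have hpt : ∀ θ ∈ Set.uIcc (0:ℝ) (2*π),
        Complex.exp (-(θ:ℂ) * Complex.I) * g θ - Complex.exp ((θ:ℂ) * Complex.I) * g θ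
          = (-2*Complex.I) * (((Real.sin θ : ℝ):ℂ) * g θ) := by
      intro θ _
      have hsin : ((Real.sin θ : ℝ):ℂ) = Complex.sin (θ:ℂ) := by
        rw [← Complex.ofReal_sin]
      rw [hsin, Complex.sin]
      have hI2' : Complex.I * Complex.I = -1 := Complex.I_mul_I
      field_simp
      ring_nf
      rw [Complex.I_sq]
      ring
    rw [intervalIntegral.integral_congr hpt, intervalIntegral.integral_const_mul,
      ← mul_assoc]
  -- imaginary part of deriv f 0 is zero
  have him : (deriv f 0).im = 0 := by
    have hd0 : DifferentiableAt ℂ f 0 := hf.differentiableAt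
      (hU.mem_nhds (hball (by simp [hr.le])))
    have h1 : HasDerivAt f (deriv f 0) ((0:ℝ):ℂ) := by
      simpa using hd0.hasDerivAt
    have h2 : HasDerivAt (fun x : ℝ => f x) (deriv f 0) 0 := h1.comp_ofReal
    have h3 : HasDerivAt (fun x : ℝ => (f x).im) (deriv f 0).im 0 :=
      (Complex.imCLM.hasFDerivAt.comp_hasDerivAt 0 h2)
    have h4 : (fun x : ℝ => (f x).im) =ᶠ[nhds (0:ℝ)] fun _ => (0:ℝ) := by
      filter_upwards [Metric.ball_mem_nhds (0:ℝ) hr] with x hx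
      exact hreal x (le_of_lt (by simpa [Real.dist_eq] using hx))
    have h5 : HasDerivAt (fun _ : ℝ => (0:ℝ)) (deriv f 0).im 0 :=
      h3.congr_of_eventuallyEq h4.symm
    have := h5.deriv
    simpa using this.symm
  -- imaginary part of the J-integral
  have hJim : (∫ θ in (0:ℝ)..2*π, ((Real.sin θ : ℝ):ℂ) * g θ).im
      = ∫ θ in (0:ℝ)..2*π, Real.sin θ * (g θ).im := by
    have hint3 : IntervalIntegrable (fun θ : ℝ => ((Real.sin θ : ℝ):ℂ) * g θ)
        MeasureTheory.volume 0 (2*π) :=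
      ((Complex.continuous_ofReal.comp Real.continuous_sin).mul hgc).intervalIntegrable 0 (2*π)
    have hcomm := ContinuousLinearMap.integral_comp_comm Complex.imCLM hint3.1
    rw [intervalIntegral.integral_of_le Real.two_pi_pos.le,
      intervalIntegral.integral_of_le Real.two_pi_pos.le]
    have h0 : (∫ θ in Set.Ioc (0:ℝ) (2*π), ((Real.sin θ : ℝ):ℂ) * g θ).im
        = ∫ θ in Set.Ioc (0:ℝ) (2*π), (((Real.sin θ : ℝ):ℂ) * g θ).im := by
      simpa only [Complex.imCLM_apply] using hcomm.symm
    rw [h0]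
    apply MeasureTheory.integral_congr_ae
    filter_upwards with θ
    simp only [Complex.mul_im, Complex.ofReal_re, Complex.ofReal_im]
    ring
  -- change of variables in the target integral
  have hsub : (∫ t in (0:ℝ)..T,
        (f ((r : ℂ) * Complex.exp ((2 * π * t / T : ℝ) * Complex.I))).im *
          Real.sin (2 * π * t / T))
      = (T / (2*π)) * ∫ θ in (0:ℝ)..2*π, Real.sin θ * (g θ).im := by
    set G : ℝ → ℝ := fun s => Real.sin s * (f ((r:ℂ) * Complex.exp ((s:ℝ) * Complex.I))).im
      with hG
    have h1 : (∫ t in (0:ℝ)..T,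
        (f ((r : ℂ) * Complex.exp ((2 * π * t / T : ℝ) * Complex.I))).im *
          Real.sin (2 * π * t / T)) = ∫ t in (0:ℝ)..T, G ((2*π/T) * t) := by
      apply intervalIntegral.integral_congr
      intro t _
      have h2 : 2 * π * t / T = (2*π/T) * t := by ring
      show (f ((r : ℂ) * Complex.exp (((2 * π * t / T : ℝ) : ℂ) * Complex.I))).im *
          Real.sin (2 * π * t / T) = G ((2*π/T) * t)
      rw [hG]
      simp only [h2]
      ring
    have hc : (2*π/T) ≠ 0 := by positivity
    rw [h1, intervalIntegral.integral_comp_mul_left G hc]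
    rw [mul_zero, show (2*π/T) * T = 2*π by field_simp]
    rw [smul_eq_mul]
    have h3 : (2*π/T)⁻¹ = T / (2*π) := by
      field_simp
    rw [h3]
    congr 1
    apply intervalIntegral.integral_congr
    intro θ _
    simp only [hG, hg, circleMap_zero]
  -- put everything together
  have hre : (deriv f 0).re
      = (2 / (r * T)) * ∫ t in (0:ℝ)..T,
          (f ((r : ℂ) * Complex.exp ((2 * π * t / T : ℝ) * Complex.I))).im *
            Real.sin (2 * π * t / T) := by
    have hre' : ∀ (a : ℝ) (K : ℂ), ((a:ℂ) * (-2*Complex.I) * K).re = 2*a*K.im := by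
      intro a K
      simp [Complex.mul_re, Complex.mul_im]
      ring_nf
      tauto
    rw [hJ, ← Complex.ofReal_inv, hre', hJim, hsub]
    have hπ : π ≠ 0 := Real.pi_ne_zero
    field_simp
  apply Complex.ext
  · simpa only [Complex.ofReal_re] using hre
  · simpa only [Complex.ofReal_im] using him
end

section
/- Let r > 0 and T > 0, and let f : ℂ → ℂ be complex-differentiable on an open set U ⊆ ℂ containing the closed disk {z : ℂ | ‖z‖ ≤ r}. Then the online estimate ∇̃(S) = (1/(S·r)) · ∫_{t=0}^{S} f(r·exp(2πi t / T)) · exp(−2πi t / T) dt converges, as S → ∞ (along the filter atTop on ℝ), to deriv f 0. -/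
open scoped Real
open Filter intervalIntegral MeasureTheory

/-- Convergence of the online gradient estimate of holomorphic equilibrium
propagation: averaging the first-harmonic-demodulated oscillating activity over ever
longer plasticity windows recovers the exact derivative at `0`. -/
theorem online_estimate_tendsto_deriv
    (r T : ℝ) (hr : 0 < r) (hT : 0 < T)
    (f : ℂ → ℂ) (U : Set ℂ) (hU : IsOpen U)
    (hdisk : {z : ℂ | ‖z‖ ≤ r} ⊆ U)
    (hf : DifferentiableOn ℂ f U) :
    Filter.Tendsto
      (fun S : ℝ =>
        (1 / ((S : ℂ) * (r : ℂ))) *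
          ∫ t in (0 : ℝ)..S,
            f ((r : ℂ) * Complex.exp ((2 * π * t / T : ℝ) * Complex.I)) *
              Complex.exp (-((2 * π * t / T : ℝ) * Complex.I)))
      Filter.atTop (nhds (deriv f 0)) := by
  set g : ℝ → ℂ := fun t =>
    f ((r : ℂ) * Complex.exp ((2 * π * t / T : ℝ) * Complex.I)) *
      Complex.exp (-((2 * π * t / T : ℝ) * Complex.I)) with hg_def
  -- points on the circle are in U
  have hmem : ∀ θ : ℝ, (r : ℂ) * Complex.exp ((θ : ℝ) * Complex.I) ∈ U := by
    intro θ
    apply hdisk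
    simp [map_mul, Complex.norm_real, abs_of_pos hr,
      Complex.norm_exp_ofReal_mul_I]
  -- continuity of g
  have hfc : ∀ z ∈ U, ContinuousAt f z := fun z hz =>
    (hf.differentiableAt (hU.mem_nhds hz)).continuousAt
  have hθc : Continuous fun t : ℝ => ((2 * π * t / T : ℝ) : ℂ) * Complex.I := by
    continuity
  have hgc : Continuous g := by
    apply Continuous.mul
    · exact hf.continuousOn.comp_continuous (continuous_const.mul hθc.cexp) fun t => hmem _
    · exact hθc.neg.cexp
  have h_int : ∀ t₁ t₂ : ℝ, IntervalIntegrable g MeasureSpace.volume t₁ t₂ := fun t₁ t₂ =>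
    hgc.intervalIntegrable t₁ t₂
  -- periodicity
  have hg_per : Function.Periodic g T := by
    intro t
    have harg : 2 * π * (t + T) / T = 2 * π * t / T + 2 * π := by
      field_simp
    simp only [hg_def, harg]
    have hcast : ((2 * π * t / T + 2 * π : ℝ) : ℂ) * Complex.I
        = ((2 * π * t / T : ℝ) : ℂ) * Complex.I + 2 * (π : ℂ) * Complex.I := by
      push_cast; ring
    rw [hcast, Complex.exp_add, Complex.exp_two_pi_mul_I, mul_one, neg_add, Complex.exp_add,
      Complex.exp_neg (2 * (π : ℂ) * Complex.I), Complex.exp_two_pi_mul_I, inv_one, mul_one]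
  -- the integral over one period
  have hA : (∫ t in (0:ℝ)..T, g t) = (T : ℂ) * r * deriv f 0 := by
    have hball : Metric.closedBall (0:ℂ) r ⊆ U := by
      intro z hz
      apply hdisk
      simpa [Metric.mem_closedBall, dist_eq_norm] using hz
    have hderiv := Complex.two_pi_I_inv_smul_circleIntegral_sub_sq_inv_smul_of_differentiable hU hball hf
      (Metric.mem_ball_self hr)
    set G : ℝ → ℂ := fun θ => f ((r : ℂ) * Complex.exp ((θ : ℝ) * Complex.I)) *
      Complex.exp (-(((θ : ℝ) : ℂ) * Complex.I)) with hG_def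
    have hcirc : (∮ z in C(0, r), ((z - 0) ^ 2)⁻¹ • f z)
        = (Complex.I / r) * ∫ θ in (0:ℝ)..(2*π), G θ := by
      rw [circleIntegral, ← intervalIntegral.integral_const_mul]
      congr 1
      funext θ
      simp only [deriv_circleMap, circleMap_zero, sub_zero, smul_eq_mul, hG_def,
        Complex.exp_neg]
      have hre : ((r:ℂ)) ≠ 0 := Complex.ofReal_ne_zero.mpr hr.ne'
      have hee : Complex.exp ((θ:ℂ) * Complex.I) ≠ 0 := Complex.exp_ne_zero _
      field_simp
    have hGint : (∫ θ in (0:ℝ)..(2*π), G θ) = 2 * π * r * deriv f 0 := by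
      rw [hcirc] at hderiv
      have h2 : ((2 * (π:ℂ) * Complex.I)⁻¹ * ((Complex.I / r) *
          ∫ θ in (0:ℝ)..(2*π), G θ)) = deriv f 0 := by
        simpa [smul_eq_mul] using hderiv
      have hπ : ((π:ℂ)) ≠ 0 := Complex.ofReal_ne_zero.mpr Real.pi_ne_zero
      have hre : ((r:ℂ)) ≠ 0 := Complex.ofReal_ne_zero.mpr hr.ne'
      field_simp at h2
      apply mul_left_cancel₀ Complex.I_ne_zero
      rw [h2]
    -- change of variables
    have hsub : g = fun t : ℝ => G (2 * π / T * t) := by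
      funext t
      have : 2 * π / T * t = 2 * π * t / T := by ring
      simp only [hG_def, this]
      rfl
    have hc : (2 * π / T) ≠ 0 := by positivity
    rw [hsub, intervalIntegral.integral_comp_mul_left G hc]
    have : 2 * π / T * T = 2 * π := by field_simp
    rw [mul_zero, this, hGint]
    rw [Complex.real_smul]; push_cast
    have hπ : ((π:ℂ)) ≠ 0 := Complex.ofReal_ne_zero.mpr Real.pi_ne_zero
    field_simp
  -- the periodic remainder
  set A : ℂ := ∫ t in (0:ℝ)..T, g t with hA_def
  set h : ℝ → ℂ := fun S => (∫ t in (0:ℝ)..S, g t) - ((S / T : ℝ) : ℂ) * A with hh_def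
  have hh_per : Function.Periodic h T := by
    intro S
    simp only [hh_def]
    have h1 : (∫ t in (0:ℝ)..(S+T), g t) = (∫ t in (0:ℝ)..S, g t) + A := by
      have := hg_per.intervalIntegral_add_eq_add 0 S h_int
      simpa using this
    have h2 : ((S + T) / T : ℝ) = S / T + 1 := by field_simp
    rw [h1, h2]
    push_cast
    ring
  have hh_cont : Continuous h := by
    apply Continuous.sub
    · exact intervalIntegral.continuous_primitive h_int 0
    · exact (Complex.continuous_ofReal.comp (continuous_id.div_const T)).mul continuous_const
  obtain ⟨C, hC⟩ := (isCompact_Icc (a := (0:ℝ)) (b := T)).exists_bound_of_continuousOn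
    hh_cont.continuousOn
  have hCb : ∀ S : ℝ, ‖h S‖ ≤ C := by
    intro S
    obtain ⟨y, hy, hyeq⟩ := hh_per.exists_mem_Ico₀ hT S
    rw [hyeq]
    exact hC y ⟨hy.1, hy.2.le⟩
  -- final limit
  have key : Filter.Tendsto (fun S : ℝ => (1 / ((S:ℂ) * r)) * h S) Filter.atTop (nhds 0) := by
    have hbound : ∀ᶠ S : ℝ in Filter.atTop,
        ‖(1 / ((S:ℂ) * r)) * h S‖ ≤ C / r * (1 / S) := by
      filter_upwards [Filter.eventually_gt_atTop (0:ℝ)] with S hS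
      have hnorm : ‖(1 / ((S:ℂ) * r))‖ = 1 / (S * r) := by
        rw [show ((S:ℂ) * r) = ((S * r : ℝ) : ℂ) by push_cast; ring]
        simp only [norm_div, norm_one, Complex.norm_real, Real.norm_eq_abs]
        rw [abs_of_pos (mul_pos hS hr)]
      rw [norm_mul, hnorm]
      calc 1 / (S * r) * ‖h S‖ ≤ 1 / (S * r) * C := by
            apply mul_le_mul_of_nonneg_left (hCb S) (by positivity)
        _ = C / r * (1 / S) := by
            field_simp
    have hten : Filter.Tendsto (fun S : ℝ => C / r * (1 / S)) Filter.atTop (nhds 0) := by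
      simpa [one_div] using tendsto_inv_atTop_zero.const_mul (C / r)
    exact squeeze_zero_norm' hbound hten
  have final : Filter.Tendsto (fun S : ℝ => deriv f 0 + (1 / ((S:ℂ) * r)) * h S)
      Filter.atTop (nhds (deriv f 0)) := by
    simpa using (tendsto_const_nhds (x := deriv f 0) (f := Filter.atTop (α := ℝ))).add key
  apply final.congr'
  filter_upwards [Filter.eventually_gt_atTop (0:ℝ)] with S hS
  have hSC : ((S:ℂ)) ≠ 0 := Complex.ofReal_ne_zero.mpr hS.ne'
  have hrC : ((r:ℂ)) ≠ 0 := Complex.ofReal_ne_zero.mpr hr.ne'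
  have hTC : ((T:ℂ)) ≠ 0 := Complex.ofReal_ne_zero.mpr hT.ne'
  have hint : (∫ t in (0:ℝ)..S, g t) = h S + ((S / T : ℝ) : ℂ) * A := by
    simp only [hh_def]; ring
  show deriv f 0 + (1 / ((S:ℂ) * r)) * h S = (1 / ((S:ℂ) * r)) * ∫ t in (0:ℝ)..S, g t
  rw [hint, hA]
  push_cast
  field_simp
  ring
end
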